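/- arXiv:1503.03742 — 7 statements merged into one kernel-verified Lean document; each statement's English description precedes it below -/
import Mathlib

section
/- Assume {(a_i,u_i)}_{i=1}^n is superincreasing. Let x ∈ K and y ∈ rect(u) with y ⪯ x. Then ∑_{i=1}^n a_i y_i ≤ ∑_{i=1}^n a_i x_i, and hence y ∈ K. Moreover, if y ≺ x and s is the largest index with y_s ≠ x_s, then: (1) ∑ a_i y_i = ∑ a_i x_i if and only if a_s = ∑_{i<s} a_i u_i, y_s = x_s − 1, and y_i = u_i and x_i = 0 for every i < s; (2) the vector z defined by z_i = u_i for i < s, z_s = y_s, and z_i = x_i for i > s belongs to K. -/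
/-- `y` is lexicographically smaller than or equal to `x`: either `y = x`, or at the
largest index `s` where they differ, `y s < x s`. -/
def lexLe {n : ℕ} (y x : Fin n → ℤ) : Prop :=
  y = x ∨ ∃ s : Fin n, y s < x s ∧ ∀ k : Fin n, s < k → y k = x k

private lemma sum_split {n : ℕ} (s : Fin n) (f : Fin n → ℤ) :
    ∑ i, f i = (∑ i ∈ Finset.Iio s, f i) + f s + ∑ i ∈ Finset.Ioi s, f i := by
  have hd1 : Disjoint ({s} : Finset (Fin n)) (Finset.Ioi s) := by
    simp [Finset.disjoint_left]
  have hd2 : Disjoint (Finset.Iio s) ({s} ∪ Finset.Ioi s) := by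
    rw [Finset.disjoint_left]
    intro i hi hmem
    simp only [Finset.mem_Iio] at hi
    simp only [Finset.mem_union, Finset.mem_singleton, Finset.mem_Ioi] at hmem
    rcases hmem with h | h
    · exact absurd hi (by simp [h])
    · exact absurd (hi.trans h) (lt_irrefl i)
  have h1 : (Finset.univ : Finset (Fin n)) = Finset.Iio s ∪ ({s} ∪ Finset.Ioi s) := by
    ext i
    simp only [Finset.mem_univ, Finset.mem_union, Finset.mem_Iio, Finset.mem_singleton,
      Finset.mem_Ioi, true_iff]
    rcases lt_trichotomy i s with h | h | h
    · exact Or.inl h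
    · exact Or.inr (Or.inl h)
    · exact Or.inr (Or.inr h)
  rw [h1, Finset.sum_union hd2, Finset.sum_union hd1, Finset.sum_singleton]
  ring

private lemma key_ineq {n : ℕ} (a u : Fin n → ℤ) (ha : ∀ i, 0 < a i)
    (hsi' : ∀ s : Fin n, ∑ i ∈ Finset.Iio s, a i * u i ≤ a s)
    (x y : Fin n → ℤ)
    (hx : ∀ i, 0 ≤ x i ∧ x i ≤ u i) (hy : ∀ i, 0 ≤ y i ∧ y i ≤ u i)
    (s : Fin n) (hys : y s < x s) (htail : ∀ k, s < k → y k = x k) :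
    (∑ i, a i * y i ≤ ∑ i, a i * x i) ∧
    (∑ i, a i * y i = ∑ i, a i * x i ↔
      (a s = ∑ i ∈ Finset.Iio s, a i * u i ∧ y s = x s - 1 ∧
        ∀ i, i < s → y i = u i ∧ x i = 0)) := by
  have hIy : ∀ i ∈ Finset.Iio s, a i * y i ≤ a i * u i :=
    fun i _ => mul_le_mul_of_nonneg_left (hy i).2 (ha i).le
  have hIysum : ∑ i ∈ Finset.Iio s, a i * y i ≤ ∑ i ∈ Finset.Iio s, a i * u i :=
    Finset.sum_le_sum hIy
  have hIx : ∀ i ∈ Finset.Iio s, 0 ≤ a i * x i :=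
    fun i _ => mul_nonneg (ha i).le (hx i).1
  have hIxsum : 0 ≤ ∑ i ∈ Finset.Iio s, a i * x i := Finset.sum_nonneg hIx
  have hT : ∑ i ∈ Finset.Ioi s, a i * y i = ∑ i ∈ Finset.Ioi s, a i * x i :=
    Finset.sum_congr rfl fun i hi => by rw [htail i (Finset.mem_Ioi.mp hi)]
  have hgap : y s + 1 ≤ x s := hys
  have hmul : a s * (y s + 1) ≤ a s * x s := mul_le_mul_of_nonneg_left hgap (ha s).le
  have hsy := sum_split s (fun i => a i * y i)
  have hsx := sum_split s (fun i => a i * x i)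
  have hss := hsi' s
  constructor
  · rw [hsy, hsx, hT]; nlinarith [hmul]
  constructor
  · intro heq
    rw [hsy, hsx, hT] at heq
    -- heq : Iy + a s * y s + T = Ix + a s * x s + T
    have h1 : ∑ i ∈ Finset.Iio s, a i * y i - ∑ i ∈ Finset.Iio s, a i * x i
        = a s * (x s - y s) := by linarith
    have h2 : a s ≤ a s * (x s - y s) := by nlinarith
    have h3 : a s * (x s - y s) ≤ a s := by
      calc a s * (x s - y s) ≤ ∑ i ∈ Finset.Iio s, a i * y i := by linarith
        _ ≤ ∑ i ∈ Finset.Iio s, a i * u i := hIysum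
        _ ≤ a s := hss
    have h4 : a s * (x s - y s) = a s := le_antisymm h3 h2
    have hxy1 : x s - y s = 1 := by
      have := (ha s).ne'
      have : a s * (x s - y s) = a s * 1 := by linarith
      exact mul_left_cancel₀ (ha s).ne' this
    have hIy0 : ∑ i ∈ Finset.Iio s, a i * y i = ∑ i ∈ Finset.Iio s, a i * u i := by
      have hIxz : ∑ i ∈ Finset.Iio s, a i * x i = 0 := by linarith
      linarith
    have hIxz : ∑ i ∈ Finset.Iio s, a i * x i = 0 := by linarith
    refine ⟨by linarith, by linarith, fun i hi => ?_⟩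
    have hyi := (Finset.sum_eq_sum_iff_of_le hIy).mp hIy0 i (Finset.mem_Iio.mpr hi)
    have hxi := (Finset.sum_eq_zero_iff_of_nonneg hIx).mp hIxz i (Finset.mem_Iio.mpr hi)
    constructor
    · exact mul_left_cancel₀ (ha i).ne' hyi
    · rcases mul_eq_zero.mp hxi with h | h
      · exact absurd h (ha i).ne'
      · exact h
  · rintro ⟨h1, h2, h3⟩
    rw [hsy, hsx, hT]
    have hIyu : ∑ i ∈ Finset.Iio s, a i * y i = ∑ i ∈ Finset.Iio s, a i * u i :=
      Finset.sum_congr rfl fun i hi => by rw [(h3 i (Finset.mem_Iio.mp hi)).1]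
    have hIxz : ∑ i ∈ Finset.Iio s, a i * x i = 0 :=
      Finset.sum_eq_zero fun i hi => by rw [(h3 i (Finset.mem_Iio.mp hi)).2, mul_zero]
    rw [hIyu, hIxz, h2, ← h1]
    ring

/-- for a superincreasing knapsack, if `x ∈ K`, `y ∈ rect u` and `y ⪯ x`,
then `a·y ≤ a·x` (hence `y ∈ K`); moreover, if `s` is the largest index where `y` and `x`
differ, then the equality characterization (1) and the membership claim (2) hold. -/
theorem stmt_1 {n : ℕ} (hn : 1 ≤ n)
    (a u : Fin n → ℤ) (ha : ∀ i, 0 < a i) (hu : ∀ i, 1 ≤ u i)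
    (b : ℤ) (hb : 0 < b)
    (hsi : ∀ i j : Fin n, (j : ℕ) = (i : ℕ) + 1 →
      ∑ k ∈ Finset.Iic i, a k * u k ≤ a j)
    (x y : Fin n → ℤ)
    (hx : ∀ i, 0 ≤ x i ∧ x i ≤ u i) (hxb : ∑ i, a i * x i ≤ b)
    (hy : ∀ i, 0 ≤ y i ∧ y i ≤ u i)
    (hyx : lexLe y x) :
    (∑ i, a i * y i ≤ ∑ i, a i * x i) ∧ (∑ i, a i * y i ≤ b) ∧
    ∀ s : Fin n, y s ≠ x s → (∀ k, s < k → y k = x k) →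
      ((∑ i, a i * y i = ∑ i, a i * x i ↔
          (a s = ∑ i ∈ Finset.Iio s, a i * u i ∧ y s = x s - 1 ∧
            ∀ i, i < s → y i = u i ∧ x i = 0)) ∧
        ((∀ i : Fin n,
            0 ≤ (if i < s then u i else if i = s then y i else x i) ∧
            (if i < s then u i else if i = s then y i else x i) ≤ u i) ∧
          ∑ i, a i * (if i < s then u i else if i = s then y i else x i) ≤ b)) := by
  have hsi' : ∀ s : Fin n, ∑ i ∈ Finset.Iio s, a i * u i ≤ a s := by
    intro s
    rcases Nat.eq_zero_or_pos (s : ℕ) with h0 | hpos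
    · have he : Finset.Iio s = ∅ := by
        ext i
        simp only [Finset.mem_Iio, Finset.notMem_empty, iff_false]
        intro hi
        exact absurd (Fin.lt_def.mp hi) (by omega)
      rw [he]; simpa using (ha s).le
    · obtain ⟨k, hk⟩ : ∃ k, (s : ℕ) = k + 1 := ⟨(s : ℕ) - 1, by omega⟩
      have hkn : k < n := by have := s.isLt; omega
      have hIic : Finset.Iio s = Finset.Iic (⟨k, hkn⟩ : Fin n) := by
        ext j
        simp only [Finset.mem_Iio, Finset.mem_Iic, Fin.lt_def, Fin.le_def, hk]
        omega
      rw [hIic]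
      exact hsi ⟨k, hkn⟩ s (by simp [hk])
  -- auxiliary: for any s with y s < x s and tail equality, everything holds
  have hcase : ∀ s : Fin n, y s ≠ x s → (∀ k, s < k → y k = x k) → y s < x s := by
    intro s hne htail
    rcases hyx with rfl | ⟨t, hyt, htt⟩
    · exact absurd rfl hne
    · rcases lt_trichotomy s t with h | rfl | h
      · exact absurd (htail t h) (ne_of_lt hyt)
      · exact hyt
      · exact absurd (htt s h) hne
  -- the global inequality
  have hmain : ∑ i, a i * y i ≤ ∑ i, a i * x i := by
    rcases hyx with rfl | ⟨t, hyt, htt⟩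
    · exact le_refl _
    · exact (key_ineq a u ha hsi' x y hx hy t hyt htt).1
  refine ⟨hmain, le_trans hmain hxb, ?_⟩
  intro s hne htail
  have hys : y s < x s := hcase s hne htail
  refine ⟨(key_ineq a u ha hsi' x y hx hy s hys htail).2, ?_, ?_⟩
  · intro i
    rcases lt_trichotomy i s with h | rfl | h
    · simp only [if_pos h]
      exact ⟨le_trans zero_le_one (hu i), le_refl _⟩
    · simp only [lt_irrefl, if_neg (lt_irrefl i), if_pos rfl]
      exact hy i
    · rw [if_neg (not_lt.mpr h.le), if_neg (ne_of_gt h)]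
      exact hx i
  · set z : Fin n → ℤ := fun i => if i < s then u i else if i = s then y i else x i with hz
    have hIz : ∑ i ∈ Finset.Iio s, a i * z i = ∑ i ∈ Finset.Iio s, a i * u i :=
      Finset.sum_congr rfl fun i hi => by
        rw [hz]; simp only [if_pos (Finset.mem_Iio.mp hi)]
    have hzs : z s = y s := by rw [hz]; simp
    have hTz : ∑ i ∈ Finset.Ioi s, a i * z i = ∑ i ∈ Finset.Ioi s, a i * x i :=
      Finset.sum_congr rfl fun i hi => by
        have h := Finset.mem_Ioi.mp hi
        rw [hz]; simp only [if_neg (not_lt.mpr h.le), if_neg (ne_of_gt h)]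
    have hsz := sum_split s (fun i => a i * z i)
    have hsx := sum_split s (fun i => a i * x i)
    have hss := hsi' s
    have hIxsum : 0 ≤ ∑ i ∈ Finset.Iio s, a i * x i :=
      Finset.sum_nonneg fun i _ => mul_nonneg (ha i).le (hx i).1
    have hmul : a s * (y s + 1) ≤ a s * x s :=
      mul_le_mul_of_nonneg_left hys (ha s).le
    have : ∑ i, a i * z i ≤ ∑ i, a i * x i := by
      rw [hsz, hsx, hzs, hTz]; nlinarith [hmul]
    exact le_trans this hxb
end

section
/- Assume {(a_i,u_i)}_{i=1}^n is superincreasing and let θ be the greedy solution of K. Then K = {x ∈ rect(u) : x ⪯ θ}; that is, the superincreasing knapsack consists exactly of the points of rect(u) that are lexicographically smaller than or equal to its greedy solution. -/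
/-- a superincreasing knapsack equals the set of points of `rect u` that are
lexicographically smaller than or equal to its greedy solution `θ`. -/
theorem stmt_2 {n : ℕ} (hn : 1 ≤ n)
    (a u : Fin n → ℤ) (ha : ∀ i, 0 < a i) (hu : ∀ i, 1 ≤ u i)
    (b : ℤ) (hb : 0 < b)
    (hsi : ∀ i j : Fin n, (j : ℕ) = (i : ℕ) + 1 →
      ∑ k ∈ Finset.Iic i, a k * u k ≤ a j)
    (θ : Fin n → ℤ)
    (hθ : ∀ i : Fin n,
      θ i = min (u i) ((b - ∑ k ∈ Finset.Ioi i, a k * θ k).fdiv (a i))) :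
    {x : Fin n → ℤ | (∀ i, 0 ≤ x i ∧ x i ≤ u i) ∧ ∑ i, a i * x i ≤ b} =
      {x : Fin n → ℤ | (∀ i, 0 ≤ x i ∧ x i ≤ u i) ∧ lexLe x θ} := by
  -- the residual capacity at index i
  set r : Fin n → ℤ := fun i => b - ∑ k ∈ Finset.Ioi i, a k * θ k with hrdef
  -- key cost bound
  have key : ∀ i, a i * θ i ≤ r i := by
    intro i
    have h1 : θ i ≤ (r i).fdiv (a i) := by
      rw [hθ i]; exact min_le_right _ _
    have h2 : a i * ((r i).fdiv (a i)) + (r i).fmod (a i) = r i :=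
      Int.mul_fdiv_add_fmod (r i) (a i)
    have h3 : 0 ≤ (r i).fmod (a i) := Int.fmod_nonneg_of_pos _ (ha i)
    have h4 : a i * θ i ≤ a i * ((r i).fdiv (a i)) :=
      mul_le_mul_of_nonneg_left h1 (ha i).le
    linarith
  -- residuals are nonnegative
  have rnonneg : ∀ i, 0 ≤ r i := by
    intro i
    by_cases h : (i : ℕ) + 1 < n
    · set j : Fin n := ⟨(i : ℕ) + 1, h⟩ with hj
      have hIoi : Finset.Ioi i = insert j (Finset.Ioi j) := by
        ext k
        simp only [Finset.mem_Ioi, Finset.mem_insert, Fin.lt_def, Fin.ext_iff, hj]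
        omega
      have hjne : j ∉ Finset.Ioi j := by simp
      have : r i = r j - a j * θ j := by
        simp only [hrdef, hIoi, Finset.sum_insert hjne]; ring
      rw [this]
      have := key j
      linarith
    · have hIoi : Finset.Ioi i = (∅ : Finset (Fin n)) := by
        ext k
        simp only [Finset.mem_Ioi, Fin.lt_def, Finset.notMem_empty, iff_false, not_lt]
        have := k.isLt
        omega
      simp only [hrdef, hIoi, Finset.sum_empty]
      linarith
  -- θ is nonnegative
  have θnonneg : ∀ i, 0 ≤ θ i := by
    intro i
    rw [hθ i]
    exact le_min (by linarith [hu i]) (Int.fdiv_nonneg (rnonneg i) (ha i).le)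
  -- partial sums from i on are at most b
  have sumIci : ∀ i, ∑ k ∈ Finset.Ici i, a k * θ k ≤ b := by
    intro i
    have hins : insert i (Finset.Ioi i) = Finset.Ici i := Finset.Ioi_insert i
    have hine : i ∉ Finset.Ioi i := by simp
    rw [← hins, Finset.sum_insert hine]
    have := key i
    simp only [hrdef] at this
    linarith
  -- θ is feasible
  have θfeas : ∑ i, a i * θ i ≤ b := by
    have hz : Finset.Ici (⟨0, hn⟩ : Fin n) = Finset.univ := by
      ext k; simp [Fin.le_def]
    calc ∑ i, a i * θ i = ∑ k ∈ Finset.Ici (⟨0, hn⟩ : Fin n), a k * θ k := by rw [hz]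
      _ ≤ b := sumIci _
  -- superincreasing in Iio form
  have siIio : ∀ s : Fin n, ∑ k ∈ Finset.Iio s, a k * u k ≤ a s := by
    intro s
    by_cases hs : (s : ℕ) = 0
    · have : Finset.Iio s = (∅ : Finset (Fin n)) := by
        ext k; simp only [Finset.mem_Iio, Fin.lt_def, Finset.notMem_empty, iff_false, not_lt]
        omega
      rw [this]; simpa using (ha s).le
    · have hlt : (s : ℕ) - 1 < n := by have := s.isLt; omega
      set i : Fin n := ⟨(s : ℕ) - 1, hlt⟩ with hi
      have hIio : Finset.Iio s = Finset.Iic i := by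
        ext k
        simp only [Finset.mem_Iio, Finset.mem_Iic, Fin.lt_def, Fin.le_def, hi]
        omega
      rw [hIio]
      exact hsi i s (by simp [hi]; omega)
  -- sum splitting at s
  have split : ∀ (s : Fin n) (f : Fin n → ℤ),
      ∑ k, f k = (∑ k ∈ Finset.Iio s, f k) + f s + ∑ k ∈ Finset.Ioi s, f k := by
    intro s f
    have hdisj : Disjoint (Finset.Iio s) (Finset.Ici s) := by
      rw [Finset.disjoint_left]
      intro k h1 h2
      simp only [Finset.mem_Iio] at h1
      simp only [Finset.mem_Ici] at h2
      exact absurd h1 (not_lt.2 h2)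
    have huniv : Finset.Iio s ∪ Finset.Ici s = Finset.univ := by
      ext k
      simp only [Finset.mem_union, Finset.mem_Iio, Finset.mem_Ici, Finset.mem_univ, iff_true]
      exact lt_or_ge k s
    have hins : insert s (Finset.Ioi s) = Finset.Ici s := Finset.Ioi_insert s
    have hine : s ∉ Finset.Ioi s := by simp
    rw [← huniv, Finset.sum_union hdisj, ← hins, Finset.sum_insert hine]
    ring
  ext x
  simp only [Set.mem_setOf_eq]
  constructor
  · rintro ⟨hx, hxb⟩
    refine ⟨hx, ?_⟩
    by_cases hxe : x = θ
    · exact Or.inl hxe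
    · right
      set T := Finset.univ.filter (fun k => x k ≠ θ k) with hT
      have hTne : T.Nonempty := by
        by_contra h
        rw [Finset.not_nonempty_iff_eq_empty] at h
        apply hxe
        funext k
        by_contra hk
        have : k ∈ T := by simp [hT, hk]
        rw [h] at this
        exact absurd this (Finset.notMem_empty k)
      set s := T.max' hTne with hs
      have hagree : ∀ k, s < k → x k = θ k := by
        intro k hk
        by_contra hk'
        have : k ∈ T := by simp [hT, hk']
        exact absurd (Finset.le_max' T k this) (not_le.2 hk)
      have hne : x s ≠ θ s := by
        have := T.max'_mem hTne
        simp only [hT, Finset.mem_filter] at this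
        exact this.2
      refine ⟨s, ?_, hagree⟩
      by_contra h
      push_neg at h
      have hgt : θ s < x s := lt_of_le_of_ne h (Ne.symm hne)
      have hθu : θ s < u s := lt_of_lt_of_le hgt (hx s).2
      have hfdiv : (r s).fdiv (a s) < u s := by
        by_contra hge
        push_neg at hge
        rw [hθ s, min_eq_left hge] at hθu
        exact absurd hθu (lt_irrefl _)
      have θeq : θ s = (r s).fdiv (a s) := by
        rw [hθ s]; exact min_eq_right hfdiv.le
      have rbound : r s < a s * (θ s + 1) := by
        have h2 : a s * ((r s).fdiv (a s)) + (r s).fmod (a s) = r s :=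
          Int.mul_fdiv_add_fmod (r s) (a s)
        have h3 : (r s).fmod (a s) < a s := Int.fmod_lt_of_pos _ (ha s)
        rw [θeq]; linarith
      have hsum := split s (fun k => a k * x k)
      have hIoieq : ∑ k ∈ Finset.Ioi s, a k * x k = ∑ k ∈ Finset.Ioi s, a k * θ k :=
        Finset.sum_congr rfl (fun k hk => by rw [hagree k (Finset.mem_Ioi.mp hk)])
      have hIionn : 0 ≤ ∑ k ∈ Finset.Iio s, a k * x k :=
        Finset.sum_nonneg (fun k _ => mul_nonneg (ha k).le (hx k).1)
      have hxs : θ s + 1 ≤ x s := hgt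
      have h5 : a s * (θ s + 1) ≤ a s * x s := mul_le_mul_of_nonneg_left hxs (ha s).le
      have hrval : r s = b - ∑ k ∈ Finset.Ioi s, a k * θ k := rfl
      have : b < ∑ k, a k * x k := by
        rw [hsum, hIoieq]
        linarith
      linarith
  · rintro ⟨hx, hlex⟩
    refine ⟨hx, ?_⟩
    rcases hlex with rfl | ⟨s, hlt, hagree⟩
    · exact θfeas
    · have hsum := split s (fun k => a k * x k)
      have hIoieq : ∑ k ∈ Finset.Ioi s, a k * x k = ∑ k ∈ Finset.Ioi s, a k * θ k :=
        Finset.sum_congr rfl (fun k hk => by rw [hagree k (Finset.mem_Ioi.mp hk)])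
      have hIio : ∑ k ∈ Finset.Iio s, a k * x k ≤ ∑ k ∈ Finset.Iio s, a k * u k :=
        Finset.sum_le_sum (fun k _ => mul_le_mul_of_nonneg_left (hx k).2 (ha k).le)
      have hxs : x s ≤ θ s - 1 := by omega
      have h5 : a s * x s ≤ a s * (θ s - 1) := mul_le_mul_of_nonneg_left hxs (ha s).le
      have hIci : a s * θ s + ∑ k ∈ Finset.Ioi s, a k * θ k ≤ b := by
        have hins : insert s (Finset.Ioi s) = Finset.Ici s := Finset.Ioi_insert s
        have hine : s ∉ Finset.Ioi s := by simp
        have := sumIci s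
        rw [← hins, Finset.sum_insert hine] at this
        exact this
      have := siIio s
      rw [hsum, hIoieq]
      linarith
end

section
/- Assume {(a_i,u_i)}_{i=1}^n is superincreasing and a_i u_i ≤ b for all i, and let θ be the greedy solution of K. Let I = {i : θ_i ≥ 1}. For c ∈ ℝⁿ and j ∈ I define f_j(c) = max{∑_{i=1}^{j} c_i x_i : x ∈ K and x_k = θ_k for all k ∈ I with k > j}, and set f_0(c) = 0. Then for every j ∈ I, f_j(c) = max( max(c_j,0)·(θ_j − 1) + ∑_{i=1}^{j−1} max(c_i,0)·u_i , c_j θ_j + f_{p(j)}(c) ), where p(j) = max{i ∈ I : i < j} if some element of I is smaller than j, and p(j) = 0 otherwise. -/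
/-- the dynamic-programming recursion for optimizing over a superincreasing
knapsack.  Here `f j` is the maximum of `∑_{i ≤ j} c i * x i` over the points `x ∈ K`
with `x k = θ k` for all `k ∈ I` with `k > j`, and `p j` is `f` at the largest element
of `I` below `j` (or `0` if there is none). -/
theorem stmt_4 {n : ℕ} (hn : 1 ≤ n)
    (a u : Fin n → ℤ) (ha : ∀ i, 0 < a i) (hu : ∀ i, 1 ≤ u i)
    (b : ℤ) (hb : 0 < b)
    (hub : ∀ i, a i * u i ≤ b)
    (hsi : ∀ i j : Fin n, (j : ℕ) = (i : ℕ) + 1 →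
      ∑ k ∈ Finset.Iic i, a k * u k ≤ a j)
    (θ : Fin n → ℤ)
    (hθ : ∀ i : Fin n,
      θ i = min (u i) ((b - ∑ k ∈ Finset.Ioi i, a k * θ k).fdiv (a i)))
    (c : Fin n → ℝ) (f p : Fin n → ℝ)
    (hf : ∀ j : Fin n, 1 ≤ θ j →
      IsGreatest {v : ℝ | ∃ x : Fin n → ℤ,
        (∀ i, 0 ≤ x i ∧ x i ≤ u i) ∧ (∑ i, a i * x i ≤ b) ∧
        (∀ k, j < k → 1 ≤ θ k → x k = θ k) ∧
        v = ∑ i ∈ Finset.Iic j, c i * (x i : ℝ)} (f j))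
    (hp : ∀ j : Fin n,
      ((∃ i, i < j ∧ 1 ≤ θ i) →
        ∃ i, i < j ∧ 1 ≤ θ i ∧ (∀ k, k < j → 1 ≤ θ k → k ≤ i) ∧ p j = f i) ∧
      ((¬ ∃ i, i < j ∧ 1 ≤ θ i) → p j = 0)) :
    ∀ j : Fin n, 1 ≤ θ j →
      f j = max
        (max (c j) 0 * ((θ j : ℝ) - 1) + ∑ i ∈ Finset.Iio j, max (c i) 0 * (u i : ℝ))
        (c j * (θ j : ℝ) + p j) := by
  intro j hj1
  set R : Fin n → ℤ := fun i => b - ∑ k ∈ Finset.Ioi i, a k * θ k with hRdef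
  have hθmin : ∀ i : Fin n, θ i = min (u i) (R i / a i) := by
    intro i
    rw [hθ i, Int.fdiv_eq_ediv_of_nonneg _ (ha i).le]
  have haθR : ∀ i, a i * θ i ≤ R i := by
    intro i
    have h1 : θ i ≤ R i / a i := by rw [hθmin i]; exact min_le_right _ _
    have h2 := (Int.le_ediv_iff_mul_le (ha i)).mp h1
    linarith
  have hsplit : ∀ (m : Fin n) (g : Fin n → ℤ),
      ∑ k, g k = ∑ k ∈ Finset.Iic m, g k + ∑ k ∈ Finset.Ioi m, g k := by
    intro m g
    rw [← Finset.sum_union (by simp [Finset.disjoint_left])]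
    congr 1
    ext k
    simp only [Finset.mem_union, Finset.mem_Iic, Finset.mem_Ioi, Finset.mem_univ, true_iff]
    exact le_or_gt k m
  have hRnn : ∀ i : Fin n, 0 ≤ R i := by
    have key : ∀ d : ℕ, ∀ i : Fin n, n - (i : ℕ) ≤ d + 1 → 0 ≤ R i := by
      intro d
      induction d with
      | zero =>
        intro i hi
        have hlast : Finset.Ioi i = ∅ := by
          ext k
          simp only [Finset.mem_Ioi, Finset.notMem_empty, iff_false, not_lt, Fin.le_def]
          have := k.isLt
          omega
        simp [hRdef, hlast]
        omega
      | succ d ih =>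
        intro i hi
        by_cases hc : (i : ℕ) + 1 < n
        · set i' : Fin n := ⟨(i : ℕ) + 1, hc⟩ with hi'
          have hins : Finset.Ioi i = insert i' (Finset.Ioi i') := by
            ext k
            simp only [Finset.mem_Ioi, Finset.mem_insert, Fin.lt_def, Fin.ext_iff, hi']
            omega
          have hsum : R i = R i' - a i' * θ i' := by
            simp only [hRdef]
            rw [hins, Finset.sum_insert (by simp)]
            ring
          have h1 := ih i' (by simp [hi']; omega)
          have h2 := haθR i'
          linarith
        · have hlast : Finset.Ioi i = ∅ := by
            ext k
            simp only [Finset.mem_Ioi, Finset.notMem_empty, iff_false, not_lt, Fin.le_def]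
            have := k.isLt
            omega
          simp [hRdef, hlast]
          omega
    intro i
    exact key n i (by omega)
  have hθnn : ∀ i, 0 ≤ θ i := by
    intro i
    rw [hθmin i]
    exact le_min (by linarith [hu i]) (Int.ediv_nonneg (hRnn i) (ha i).le)
  have hθu : ∀ i, θ i ≤ u i := by
    intro i
    rw [hθmin i]
    exact min_le_left _ _
  have hpre : ∀ (x : Fin n → ℤ), (∑ i, a i * x i ≤ b) → ∀ m : Fin n,
      (∀ k, m < k → x k = θ k) → ∑ i ∈ Finset.Iic m, a i * x i ≤ R m := by
    intro x hxs m hxt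
    have h1 : ∑ k ∈ Finset.Ioi m, a k * x k = ∑ k ∈ Finset.Ioi m, a k * θ k :=
      Finset.sum_congr rfl fun k hk => by rw [hxt k (Finset.mem_Ioi.mp hk)]
    have h2 := hsplit m fun i => a i * x i
    simp only [hRdef]
    beta_reduce at h1 h2
    linarith
  have hxle : ∀ (x : Fin n → ℤ), (∀ i, 0 ≤ x i ∧ x i ≤ u i) →
      ∀ m : Fin n, (∑ i ∈ Finset.Iic m, a i * x i ≤ R m) → x m ≤ θ m := by
    intro x hxb m hs
    have h1 : Finset.Iic m = insert m (Finset.Iio m) := (Finset.Iio_insert m).symm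
    have h2 : (0 : ℤ) ≤ ∑ i ∈ Finset.Iio m, a i * x i :=
      Finset.sum_nonneg fun i _ => mul_nonneg (ha i).le (hxb i).1
    rw [h1, Finset.sum_insert (by simp)] at hs
    have h3 : a m * x m ≤ R m := by linarith
    have h4 : x m ≤ R m / a m :=
      (Int.le_ediv_iff_mul_le (ha m)).mpr (by rw [mul_comm]; exact h3)
    rw [hθmin m]
    exact le_min (hxb m).2 h4
  have force : ∀ (x : Fin n → ℤ), (∀ i, 0 ≤ x i ∧ x i ≤ u i) → (∑ i, a i * x i ≤ b) →
      ∀ m : ℕ, (∀ k : Fin n, m ≤ (k : ℕ) → 1 ≤ θ k → x k = θ k) →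
      ∀ k : Fin n, m ≤ (k : ℕ) → x k = θ k := by
    intro x hxb hxs m hxt
    have key : ∀ d : ℕ, ∀ k : Fin n, n - (k : ℕ) ≤ d → m ≤ (k : ℕ) → x k = θ k := by
      intro d
      induction d with
      | zero =>
        intro k hk _
        exact absurd hk (by have := k.isLt; omega)
      | succ d ih =>
        intro k hk hmk
        have htail : ∀ k' : Fin n, k < k' → x k' = θ k' := by
          intro k' hkk'
          have h5 := Fin.lt_def.mp hkk'
          exact ih k' (by have := k'.isLt; omega) (by omega)
        have hs := hpre x hxs k htail
        have hle := hxle x hxb k hs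
        rcases lt_or_ge (θ k) 1 with h | h
        · have h6 := hθnn k
          have h7 := (hxb k).1
          omega
        · exact hxt k hmk h
    intro k hmk
    exact key n k (by omega) hmk
  have hsiu : ∀ m : Fin n, ∑ i ∈ Finset.Iio m, a i * u i ≤ a m := by
    intro m
    rcases Nat.eq_zero_or_pos (m : ℕ) with h0 | h0
    · have he : Finset.Iio m = ∅ := by
        ext k
        simp only [Finset.mem_Iio, Finset.notMem_empty, iff_false, not_lt, Fin.le_def]
        omega
      rw [he]
      simpa using (ha m).le
    · set i : Fin n := ⟨(m : ℕ) - 1, by have := m.isLt; omega⟩ with hidef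
      have he : Finset.Iio m = Finset.Iic i := by
        ext k
        simp only [Finset.mem_Iio, Finset.mem_Iic, Fin.lt_def, Fin.le_def, hidef]
        omega
      rw [he]
      exact hsi i m (by simp [hidef]; omega)
  have hsplitR : ∀ (m m' : Fin n), m < m' → ∀ g : Fin n → ℝ,
      ∑ k ∈ Finset.Iic m', g k = ∑ k ∈ Finset.Iic m, g k + ∑ k ∈ Finset.Ioc m m', g k := by
    intro m m' hmm' g
    rw [← Finset.sum_union (by
      simp only [Finset.disjoint_left, Finset.mem_Iic, Finset.mem_Ioc]
      exact fun k h1 h2 => absurd h2.1 (not_lt.mpr h1))]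
    congr 1
    ext k
    have := Fin.lt_def.mp hmm'
    simp only [Finset.mem_union, Finset.mem_Iic, Finset.mem_Ioc, Fin.le_def, Fin.lt_def]
    omega
  have hRt : ∀ m : Fin n, ∑ k ∈ Finset.Ioi m, a k * θ k = b - R m := by
    intro m
    simp [hRdef]
  classical
  -- Lower bound by the first branch
  have hAle : max (c j) 0 * ((θ j : ℝ) - 1) + ∑ i ∈ Finset.Iio j, max (c i) 0 * (u i : ℝ) ≤ f j := by
    set x : Fin n → ℤ := fun i =>
      if i < j then (if 0 ≤ c i then u i else 0)
      else if i = j then (if 0 ≤ c j then θ j - 1 else 0) else θ i with hxdef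
    have hxj : x j = if 0 ≤ c j then θ j - 1 else 0 := by
      simp [hxdef]
    have hxb : ∀ i, 0 ≤ x i ∧ x i ≤ u i := by
      intro i
      by_cases h1 : i < j
      · by_cases h2 : 0 ≤ c i
        · simp only [hxdef, if_pos h1, if_pos h2]
          exact ⟨by linarith [hu i], le_refl _⟩
        · simp only [hxdef, if_pos h1, if_neg h2]
          exact ⟨le_refl _, by linarith [hu i]⟩
      · by_cases h2 : i = j
        · subst h2
          rw [hxj]
          split_ifs with h3
          · have := hθu i
            omega
          · exact ⟨le_refl _, by linarith [hu i]⟩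
        · simp only [hxdef, if_neg h1, if_neg h2]
          exact ⟨hθnn i, hθu i⟩
    have hxalt : ∀ k, j < k → x k = θ k := by
      intro k hk
      simp only [hxdef, if_neg (lt_asymm hk), if_neg hk.ne']
    have hxs : ∑ i, a i * x i ≤ b := by
      have e1 := hsplit j fun i => a i * x i
      have e2 : ∑ k ∈ Finset.Ioi j, a k * x k = ∑ k ∈ Finset.Ioi j, a k * θ k :=
        Finset.sum_congr rfl fun k hk => by rw [hxalt k (Finset.mem_Ioi.mp hk)]
      have e3 : ∑ i ∈ Finset.Iic j, a i * x i = a j * x j + ∑ i ∈ Finset.Iio j, a i * x i := by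
        rw [← Finset.Iio_insert j, Finset.sum_insert (by simp)]
      have e4 : ∑ i ∈ Finset.Iio j, a i * x i ≤ ∑ i ∈ Finset.Iio j, a i * u i :=
        Finset.sum_le_sum fun i _ => mul_le_mul_of_nonneg_left (hxb i).2 (ha i).le
      have e5 : a j * x j ≤ a j * (θ j - 1) := by
        apply mul_le_mul_of_nonneg_left _ (ha j).le
        rw [hxj]
        split_ifs with h
        · exact le_refl _
        · omega
      have e6 := hsiu j
      have e7 := haθR j
      have e8 := hRt j
      beta_reduce at e1 e2
      linarith
    apply (hf j hj1).2
    refine ⟨x, hxb, hxs, fun k hk _ => hxalt k hk, ?_⟩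
    have e3 : ∑ i ∈ Finset.Iic j, c i * (x i : ℝ)
        = c j * (x j : ℝ) + ∑ i ∈ Finset.Iio j, c i * (x i : ℝ) := by
      rw [← Finset.Iio_insert j, Finset.sum_insert (by simp)]
    rw [e3]
    congr 1
    · rw [hxj]
      by_cases h : 0 ≤ c j
      · rw [max_eq_left h, if_pos h]
        push_cast
        ring
      · rw [max_eq_right (le_of_not_ge h), if_neg h]
        simp
    · apply Finset.sum_congr rfl
      intro i hi
      have hi' := Finset.mem_Iio.mp hi
      simp only [hxdef, if_pos hi']
      by_cases h : 0 ≤ c i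
      · rw [max_eq_left h, if_pos h]
      · rw [max_eq_right (le_of_not_ge h), if_neg h]
        simp
  -- Lower bound by the second branch
  have hBle : c j * (θ j : ℝ) + p j ≤ f j := by
    by_cases hex : ∃ i, i < j ∧ 1 ≤ θ i
    · obtain ⟨i0, hi0j, hθi0, hmaxI, hpj⟩ := (hp j).1 hex
      obtain ⟨x', hxb', hxs', hxt', hxv'⟩ := (hf i0 hθi0).1
      have hforce' : ∀ k : Fin n, (i0 : ℕ) + 1 ≤ (k : ℕ) → x' k = θ k :=
        force x' hxb' hxs' ((i0 : ℕ) + 1)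
          (fun k hk hθk => hxt' k (Fin.lt_def.mpr (by omega)) hθk)
      set x : Fin n → ℤ := fun i => if i ≤ i0 then x' i else θ i with hxdef
      have hxb : ∀ i, 0 ≤ x i ∧ x i ≤ u i := by
        intro i
        simp only [hxdef]
        split_ifs with h
        · exact hxb' i
        · exact ⟨hθnn i, hθu i⟩
      have hpre' : ∑ i ∈ Finset.Iic i0, a i * x' i ≤ R i0 :=
        hpre x' hxs' i0 (fun k hk => hforce' k (by have := Fin.lt_def.mp hk; omega))
      have hxs : ∑ i, a i * x i ≤ b := by
        have e1 := hsplit i0 fun i => a i * x i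
        have e2 : ∑ k ∈ Finset.Iic i0, a k * x k = ∑ k ∈ Finset.Iic i0, a k * x' k :=
          Finset.sum_congr rfl fun k hk => by
            simp only [hxdef, if_pos (Finset.mem_Iic.mp hk)]
        have e3 : ∑ k ∈ Finset.Ioi i0, a k * x k = ∑ k ∈ Finset.Ioi i0, a k * θ k :=
          Finset.sum_congr rfl fun k hk => by
            simp only [hxdef, if_neg (not_le.mpr (Finset.mem_Ioi.mp hk))]
        have e4 := hRt i0
        beta_reduce at e1 e2 e3
        linarith
      apply (hf j hj1).2
      refine ⟨x, hxb, hxs, ?_, ?_⟩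
      · intro k hk _
        simp only [hxdef, if_neg (not_le.mpr (hi0j.trans hk))]
      · rw [hpj, hxv']
        have e5 := hsplitR i0 j hi0j fun k => c k * (x k : ℝ)
        have e6 : ∑ k ∈ Finset.Iic i0, c k * (x k : ℝ) = ∑ k ∈ Finset.Iic i0, c k * ((x' k : ℤ) : ℝ) :=
          Finset.sum_congr rfl fun k hk => by
            simp only [hxdef, if_pos (Finset.mem_Iic.mp hk)]
        have e7 : ∑ k ∈ Finset.Ioc i0 j, c k * (x k : ℝ) = c j * (θ j : ℝ) := by
          rw [← Finset.Ioo_insert_right hi0j, Finset.sum_insert (by simp)]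
          have e8 : ∑ k ∈ Finset.Ioo i0 j, c k * (x k : ℝ) = 0 := by
            apply Finset.sum_eq_zero
            intro k hk
            have hk' := Finset.mem_Ioo.mp hk
            have hθk : θ k = 0 := by
              rcases lt_or_ge (θ k) 1 with h | h
              · have := hθnn k
                omega
              · exact absurd (hmaxI k hk'.2 h) (not_le.mpr hk'.1)
            simp only [hxdef, if_neg (not_le.mpr hk'.1), hθk]
            simp
          rw [e8]
          simp only [hxdef, if_neg (not_le.mpr hi0j)]
          ring
        beta_reduce at e5 e6 e7
        rw [e5, e6, e7]
        ring
    · have hp0 := (hp j).2 hex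
      rw [hp0]
      apply (hf j hj1).2
      refine ⟨θ, fun i => ⟨hθnn i, hθu i⟩, ?_, fun k _ _ => rfl, ?_⟩
      · set z : Fin n := ⟨0, by omega⟩ with hz
        have e1 := hsplit z fun i => a i * θ i
        have e2 := hRt z
        have e3 : ∑ k ∈ Finset.Iic z, a k * θ k = a z * θ z := by
          have hzz : Finset.Iic z = {z} := by
            ext k
            simp only [Finset.mem_Iic, Finset.mem_singleton, Fin.le_def, Fin.ext_iff, hz]
            omega
          rw [hzz, Finset.sum_singleton]
        have e4 := haθR z
        beta_reduce at e1 e3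
        linarith
      · have e1 : ∑ i ∈ Finset.Iic j, c i * (θ i : ℝ)
            = c j * (θ j : ℝ) + ∑ i ∈ Finset.Iio j, c i * (θ i : ℝ) := by
          rw [← Finset.Iio_insert j, Finset.sum_insert (by simp)]
        have e2 : ∑ i ∈ Finset.Iio j, c i * (θ i : ℝ) = 0 := by
          apply Finset.sum_eq_zero
          intro k hk
          have hθk : θ k = 0 := by
            rcases lt_or_ge (θ k) 1 with h | h
            · have := hθnn k
              omega
            · exact absurd ⟨k, Finset.mem_Iio.mp hk, h⟩ hex
          rw [hθk]
          simp
        rw [e1, e2]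
  -- Upper bound
  have hub2 : f j ≤ max
      (max (c j) 0 * ((θ j : ℝ) - 1) + ∑ i ∈ Finset.Iio j, max (c i) 0 * (u i : ℝ))
      (c j * (θ j : ℝ) + p j) := by
    obtain ⟨x, hxb, hxs, hxt, hxv⟩ := (hf j hj1).1
    have hforce : ∀ k : Fin n, (j : ℕ) + 1 ≤ (k : ℕ) → x k = θ k :=
      force x hxb hxs ((j : ℕ) + 1) (fun k hk hθk => hxt k (Fin.lt_def.mpr (by omega)) hθk)
    have hprej : ∑ i ∈ Finset.Iic j, a i * x i ≤ R j :=
      hpre x hxs j (fun k hk => hforce k (by have := Fin.lt_def.mp hk; omega))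
    have hxjle : x j ≤ θ j := hxle x hxb j hprej
    have hsum : ∑ i ∈ Finset.Iic j, c i * (x i : ℝ)
        = c j * (x j : ℝ) + ∑ i ∈ Finset.Iio j, c i * (x i : ℝ) := by
      rw [← Finset.Iio_insert j, Finset.sum_insert (by simp)]
    rcases eq_or_lt_of_le hxjle with heq | hlt
    · -- x j = θ j : bound by the second branch
      by_cases hex : ∃ i, i < j ∧ 1 ≤ θ i
      · obtain ⟨i0, hi0j, hθi0, hmaxI, hpj⟩ := (hp j).1 hex
        have tail' : ∀ k, i0 < k → 1 ≤ θ k → x k = θ k := by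
          intro k hk hθk
          rcases lt_trichotomy k j with h | h | h
          · exact absurd (hmaxI k h hθk) (not_le.mpr hk)
          · subst h
            exact heq
          · exact hxt k h hθk
        have hmem : ∑ i ∈ Finset.Iic i0, c i * (x i : ℝ) ≤ f i0 :=
          (hf i0 hθi0).2 ⟨x, hxb, hxs, tail', rfl⟩
        have hforce0 : ∀ k : Fin n, (i0 : ℕ) + 1 ≤ (k : ℕ) → x k = θ k :=
          force x hxb hxs ((i0 : ℕ) + 1)
            (fun k hk hθk => tail' k (Fin.lt_def.mpr (by omega)) hθk)
        have e5 := hsplitR i0 j hi0j fun k => c k * (x k : ℝ)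
        have e7 : ∑ k ∈ Finset.Ioc i0 j, c k * (x k : ℝ) = c j * (θ j : ℝ) := by
          rw [← Finset.Ioo_insert_right hi0j, Finset.sum_insert (by simp)]
          have e8 : ∑ k ∈ Finset.Ioo i0 j, c k * (x k : ℝ) = 0 := by
            apply Finset.sum_eq_zero
            intro k hk
            have hk' := Finset.mem_Ioo.mp hk
            have hθk : θ k = 0 := by
              rcases lt_or_ge (θ k) 1 with h | h
              · have := hθnn k
                omega
              · exact absurd (hmaxI k hk'.2 h) (not_le.mpr hk'.1)
            rw [hforce0 k (by have := Fin.lt_def.mp hk'.1; omega), hθk]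
            simp
          rw [e8, heq]
          ring
        have hfinal : f j ≤ c j * (θ j : ℝ) + p j := by
          rw [hxv, hpj]
          beta_reduce at e5 e7
          rw [e5, e7]
          linarith
        exact hfinal.trans (le_max_right _ _)
      · have hp0 := (hp j).2 hex
        have hall : ∀ k : Fin n, x k = θ k := by
          intro k
          apply force x hxb hxs 0 _ k (Nat.zero_le _)
          intro k' _ hθk'
          rcases lt_trichotomy k' j with h | h | h
          · exact absurd ⟨k', h, hθk'⟩ hex
          · subst h
            exact heq
          · exact hxt k' h hθk'
        have e2 : ∑ i ∈ Finset.Iio j, c i * (x i : ℝ) = 0 := by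
          apply Finset.sum_eq_zero
          intro k hk
          have hθk : θ k = 0 := by
            rcases lt_or_ge (θ k) 1 with h | h
            · have := hθnn k
              omega
            · exact absurd ⟨k, Finset.mem_Iio.mp hk, h⟩ hex
          rw [hall k, hθk]
          simp
        have hfinal : f j = c j * (θ j : ℝ) + p j := by
          rw [hxv, hsum, e2, heq, hp0]
        rw [hfinal]
        exact le_max_right _ _
    · -- x j < θ j : bound by the first branch
      have h1 : c j * (x j : ℝ) ≤ max (c j) 0 * ((θ j : ℝ) - 1) := by
        rcases le_or_gt 0 (c j) with h | h
        · rw [max_eq_left h]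
          apply mul_le_mul_of_nonneg_left _ h
          have h2 : x j ≤ θ j - 1 := by omega
          calc (x j : ℝ) ≤ ((θ j - 1 : ℤ) : ℝ) := by exact_mod_cast h2
            _ = (θ j : ℝ) - 1 := by push_cast; ring
        · rw [max_eq_right h.le, zero_mul]
          exact mul_nonpos_iff.mpr (Or.inr ⟨h.le, by exact_mod_cast (hxb j).1⟩)
      have h2 : ∑ i ∈ Finset.Iio j, c i * (x i : ℝ) ≤ ∑ i ∈ Finset.Iio j, max (c i) 0 * (u i : ℝ) := by
        apply Finset.sum_le_sum
        intro i _
        rcases le_or_gt 0 (c i) with h | h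
        · rw [max_eq_left h]
          apply mul_le_mul_of_nonneg_left _ h
          exact_mod_cast (hxb i).2
        · rw [max_eq_right h.le, zero_mul]
          exact mul_nonpos_iff.mpr (Or.inr ⟨h.le, by exact_mod_cast (hxb i).1⟩)
      have hfinal : f j ≤ max (c j) 0 * ((θ j : ℝ) - 1) + ∑ i ∈ Finset.Iio j, max (c i) 0 * (u i : ℝ) := by
        rw [hxv, hsum]
        linarith
      exact hfinal.trans (le_max_left _ _)
  exact le_antisymm hub2 (max_le hAle hBle)
end

section
/- Assume {(a_i,u_i)}_{i=1}^n is superincreasing and a_i u_i ≤ b for all i (so that n ∈ I). For every j < n and every i ∈ I_j with i < n, writing next(i) = min{k ∈ I : k > i}, one has φ_j(next(i)) − φ_j(i) = φ_j(i)·(u_i − θ_i). Consequently, for every i ∈ I_j, φ_j(i) = u_j − θ_j + ∑_{k ∈ I_j, k < i} φ_j(k)·(u_k − θ_k). -/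
lemma tele_aux {α : Type*} [LinearOrder α] (c : α → ℤ) (S : Finset α) :
    ∑ k ∈ S, (∏ m ∈ S.filter (· < k), c m) * (c k - 1) = ∏ k ∈ S, c k - 1 := by
  induction S using Finset.induction_on_max with
  | empty => simp
  | insert a s ha ih =>
    have hma : a ∉ s := fun h => lt_irrefl a (ha a h)
    have h1 : (insert a s).filter (· < a) = s := by
      ext x
      simp only [Finset.mem_filter, Finset.mem_insert]
      constructor
      · rintro ⟨h | h, hx⟩
        · exact absurd hx (h ▸ lt_irrefl a)
        · exact h
      · exact fun hx => ⟨Or.inr hx, ha x hx⟩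
    have h2 : ∀ k ∈ s, (insert a s).filter (· < k) = s.filter (· < k) := by
      intro k hk
      rw [Finset.filter_insert, if_neg (not_lt.mpr (le_of_lt (ha k hk)))]
    rw [Finset.sum_insert hma, Finset.prod_insert hma, h1,
      Finset.sum_congr rfl (fun k hk => by rw [h2 k hk]), ih]
    ring

/-- recursion identities for the coefficients `φ_j` of the packing
inequalities.  Indices are `Fin n` (0-based), so "`j < n`" of the paper (1-based) reads
`(j : ℕ) + 1 < n`, and `ni = next i` is the smallest element of `I` above `i`. -/
theorem stmt_5 {n : ℕ} (hn : 1 ≤ n)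
    (a u : Fin n → ℤ) (ha : ∀ i, 0 < a i) (hu : ∀ i, 1 ≤ u i)
    (b : ℤ) (hb : 0 < b)
    (hub : ∀ i, a i * u i ≤ b)
    (hsi : ∀ i j : Fin n, (j : ℕ) = (i : ℕ) + 1 →
      ∑ k ∈ Finset.Iic i, a k * u k ≤ a j)
    (θ : Fin n → ℤ)
    (hθ : ∀ i : Fin n,
      θ i = min (u i) ((b - ∑ k ∈ Finset.Ioi i, a k * θ k).fdiv (a i)))
    (φ : Fin n → Fin n → ℤ)
    (hφ : ∀ j i : Fin n, φ j i =
      (u j - θ j) * ∏ k ∈ (Finset.Ioo j i).filter (fun k => 1 ≤ θ k), (u k + 1 - θ k)) :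
    (∀ j i ni : Fin n, (j : ℕ) + 1 < n → j < i → 1 ≤ θ i → (i : ℕ) + 1 < n →
      i < ni → 1 ≤ θ ni → (∀ k, i < k → 1 ≤ θ k → ni ≤ k) →
      φ j ni - φ j i = φ j i * (u i - θ i)) ∧
    (∀ j i : Fin n, (j : ℕ) + 1 < n → j < i → 1 ≤ θ i →
      φ j i = u j - θ j +
        ∑ k ∈ (Finset.Ioo j i).filter (fun k => 1 ≤ θ k), φ j k * (u k - θ k)) := by
  constructor
  · intro j i ni _ hji hθi _ hini hθni hnext
    have hset : (Finset.Ioo j ni).filter (fun k => 1 ≤ θ k) =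
        insert i ((Finset.Ioo j i).filter (fun k => 1 ≤ θ k)) := by
      ext m
      simp only [Finset.mem_filter, Finset.mem_Ioo, Finset.mem_insert]
      constructor
      · rintro ⟨⟨hjm, hmni⟩, hθm⟩
        rcases lt_trichotomy m i with h | h | h
        · exact Or.inr ⟨⟨hjm, h⟩, hθm⟩
        · exact Or.inl h
        · exact absurd (hnext m h hθm) (not_le.mpr hmni)
      · rintro (rfl | ⟨⟨hjm, hmi⟩, hθm⟩)
        · exact ⟨⟨hji, hini⟩, hθi⟩
        · exact ⟨⟨hjm, lt_trans hmi hini⟩, hθm⟩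
    have hni : i ∉ (Finset.Ioo j i).filter (fun k => 1 ≤ θ k) := by
      simp [Finset.mem_Ioo]
    rw [hφ j ni, hφ j i, hset, Finset.prod_insert hni]
    ring
  · intro j i _ hji hθi
    set S := (Finset.Ioo j i).filter (fun k => 1 ≤ θ k) with hS
    set c : Fin n → ℤ := fun k => u k + 1 - θ k with hc
    have key : ∀ k ∈ S, φ j k * (u k - θ k) =
        (u j - θ j) * ((∏ m ∈ S.filter (· < k), c m) * (c k - 1)) := by
      intro k hk
      have hki : k < i := by
        simp only [hS, Finset.mem_filter, Finset.mem_Ioo] at hk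
        exact hk.1.2
      have hfil : S.filter (· < k) = (Finset.Ioo j k).filter (fun m => 1 ≤ θ m) := by
        ext m
        simp only [hS, Finset.mem_filter, Finset.mem_Ioo]
        constructor
        · rintro ⟨⟨⟨hjm, _⟩, hθm⟩, hmk⟩
          exact ⟨⟨hjm, hmk⟩, hθm⟩
        · rintro ⟨⟨hjm, hmk⟩, hθm⟩
          exact ⟨⟨⟨hjm, lt_trans hmk hki⟩, hθm⟩, hmk⟩
      rw [hφ j k, hfil]
      ring
    rw [Finset.sum_congr rfl key, ← Finset.mul_sum, tele_aux c S, hφ j i]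
    ring
end

section
/- Assume {(a_i,u_i)}_{i=1}^n is superincreasing and a_i u_i ≤ b for all i. Then for every j ∈ {1,…,n} and every x ∈ K, the packing inequality holds: x_j + ∑_{i ∈ I_j} φ_j(i)·(x_i − θ_i) ≤ θ_j. In particular every packing inequality is valid for conv(K). -/
/-- Telescoping identity: `∑_{i∈S} f i ∏_{k∈S, k<i} (f k + 1) = ∏_{k∈S}(f k + 1) - 1`. -/
lemma telescope_aux {n : ℕ} (f : Fin n → ℤ) (S : Finset (Fin n)) :
    ∑ i ∈ S, f i * ∏ k ∈ S.filter (fun k => k < i), (f k + 1)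
      = ∏ k ∈ S, (f k + 1) - 1 := by
  induction S using Finset.induction_on_max with
  | empty => simp
  | insert a s ha ih =>
    have hanotin : a ∉ s := fun h => lt_irrefl a (ha a h)
    rw [Finset.sum_insert hanotin, Finset.prod_insert hanotin]
    have h1 : (insert a s).filter (fun k => k < a) = s := by
      rw [Finset.filter_insert, if_neg (lt_irrefl a)]
      exact Finset.filter_true_of_mem ha
    have h2 : ∀ i ∈ s, (insert a s).filter (fun k => k < i)
        = s.filter (fun k => k < i) := by
      intro i hi
      rw [Finset.filter_insert, if_neg (fun h => absurd (ha i hi) (not_lt.mpr h.le))]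
    rw [h1, Finset.sum_congr rfl (fun i hi => by rw [h2 i hi]), ih]
    ring

/-- Lex property of the greedy solution. -/
lemma greedy_lex {n : ℕ} (a u : Fin n → ℤ) (ha : ∀ i, 0 < a i) (b : ℤ)
    (θ : Fin n → ℤ)
    (hθ : ∀ i : Fin n,
      θ i = min (u i) ((b - ∑ k ∈ Finset.Ioi i, a k * θ k).fdiv (a i)))
    (x : Fin n → ℤ) (hx : ∀ i, 0 ≤ x i ∧ x i ≤ u i) (hxb : ∑ i, a i * x i ≤ b)
    (k : Fin n) (hag : ∀ i, k < i → x i = θ i) : x k ≤ θ k := by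
  rw [hθ k]
  refine le_min (hx k).2 ?_
  have hsum : ∑ i ∈ Finset.Ioi k, a i * θ i = ∑ i ∈ Finset.Ioi k, a i * x i :=
    Finset.sum_congr rfl (fun i hi => by rw [hag i (Finset.mem_Ioi.mp hi)])
  rw [hsum, Int.fdiv_eq_ediv_of_nonneg _ (ha k).le, Int.le_ediv_iff_mul_le (ha k)]
  have hknotin : k ∉ Finset.Ioi k := by simp
  have h1 : a k * x k + ∑ i ∈ Finset.Ioi k, a i * x i ≤ ∑ i, a i * x i := by
    have h0 : ∑ i ∈ insert k (Finset.Ioi k), a i * x i ≤ ∑ i, a i * x i :=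
      Finset.sum_le_sum_of_subset_of_nonneg (Finset.subset_univ _)
        (fun i _ _ => mul_nonneg (ha i).le (hx i).1)
    rwa [Finset.sum_insert hknotin] at h0
  linarith


/-- Embedding of integer vectors into real vectors. -/
noncomputable def toReal {n : ℕ} (x : Fin n → ℤ) : Fin n → ℝ := fun i => (x i : ℝ)

/-- validity of the packing inequalities: for every `j` and every `x ∈ K`,
`x j + ∑_{i ∈ I_j} φ j i * (x i - θ i) ≤ θ j`; in particular each packing inequality is
valid for the convex hull of `K` (viewed in `ℝⁿ`). -/
theorem stmt_6 {n : ℕ} (hn : 1 ≤ n)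
    (a u : Fin n → ℤ) (ha : ∀ i, 0 < a i) (hu : ∀ i, 1 ≤ u i)
    (b : ℤ) (hb : 0 < b)
    (hub : ∀ i, a i * u i ≤ b)
    (hsi : ∀ i j : Fin n, (j : ℕ) = (i : ℕ) + 1 →
      ∑ k ∈ Finset.Iic i, a k * u k ≤ a j)
    (θ : Fin n → ℤ)
    (hθ : ∀ i : Fin n,
      θ i = min (u i) ((b - ∑ k ∈ Finset.Ioi i, a k * θ k).fdiv (a i)))
    (φ : Fin n → Fin n → ℤ)
    (hφ : ∀ j i : Fin n, φ j i =
      (u j - θ j) * ∏ k ∈ (Finset.Ioo j i).filter (fun k => 1 ≤ θ k), (u k + 1 - θ k)) :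
    (∀ j : Fin n, ∀ x : Fin n → ℤ, (∀ i, 0 ≤ x i ∧ x i ≤ u i) → ∑ i, a i * x i ≤ b →
      x j + ∑ i ∈ (Finset.Ioi j).filter (fun i => 1 ≤ θ i), φ j i * (x i - θ i) ≤ θ j) ∧
    (∀ j : Fin n, ∀ y : Fin n → ℝ,
      y ∈ convexHull ℝ (toReal ''
        {x : Fin n → ℤ | (∀ i, 0 ≤ x i ∧ x i ≤ u i) ∧ ∑ i, a i * x i ≤ b}) →
      y j + ∑ i ∈ (Finset.Ioi j).filter (fun i => 1 ≤ θ i),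
        (φ j i : ℝ) * (y i - (θ i : ℝ)) ≤ (θ j : ℝ)) := by
  have hθu : ∀ i, θ i ≤ u i := fun i => (hθ i) ▸ min_le_left _ _
  have hφnn : ∀ j i : Fin n, 0 ≤ φ j i := by
    intro j i
    rw [hφ]
    exact mul_nonneg (by linarith [hθu j])
      (Finset.prod_nonneg fun k _ => by linarith [hθu k])
  have part1 : ∀ j : Fin n, ∀ x : Fin n → ℤ, (∀ i, 0 ≤ x i ∧ x i ≤ u i) →
      ∑ i, a i * x i ≤ b →
      x j + ∑ i ∈ (Finset.Ioi j).filter (fun i => 1 ≤ θ i), φ j i * (x i - θ i) ≤ θ j := by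
    intro j x hx hxb
    set T := (Finset.Ioi j).filter (fun i => 1 ≤ θ i) with hT
    by_cases hD : ∀ i, j < i → x i = θ i
    · have hz : ∑ i ∈ T, φ j i * (x i - θ i) = 0 := by
        refine Finset.sum_eq_zero fun i hi => ?_
        rw [hD i (Finset.mem_Ioi.mp (Finset.mem_filter.mp hi).1)]; ring
      rw [hz]
      have := greedy_lex a u ha b θ hθ x hx hxb j hD
      linarith
    · push_neg at hD
      obtain ⟨i0, hi0, hi0ne⟩ := hD
      set D := (Finset.Ioi j).filter (fun i => x i ≠ θ i) with hDdef
      have hDne : D.Nonempty := ⟨i0, Finset.mem_filter.mpr ⟨Finset.mem_Ioi.mpr hi0, hi0ne⟩⟩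
      set m := D.max' hDne with hm
      have hmD : m ∈ D := D.max'_mem hDne
      have hmj : j < m := Finset.mem_Ioi.mp (Finset.mem_filter.mp hmD).1
      have hmne : x m ≠ θ m := (Finset.mem_filter.mp hmD).2
      have hagm : ∀ i, m < i → x i = θ i := by
        intro i hi
        by_contra hne
        have hiD : i ∈ D :=
          Finset.mem_filter.mpr ⟨Finset.mem_Ioi.mpr (hmj.trans hi), hne⟩
        exact absurd (D.le_max' i hiD) (not_le.mpr hi)
      have hxm : x m ≤ θ m - 1 := by
        have h1 := greedy_lex a u ha b θ hθ x hx hxb m hagm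
        rcases lt_or_eq_of_le h1 with h | h
        · omega
        · exact absurd h hmne
      have hθm1 : 1 ≤ θ m := by linarith [(hx m).1]
      have hmT : m ∈ T := Finset.mem_filter.mpr ⟨Finset.mem_Ioi.mpr hmj, hθm1⟩
      set g : Fin n → ℤ :=
        fun i => if i < m then φ j i * (u i - θ i) else if i = m then -(φ j m) else 0
        with hg
      have hbound : ∑ i ∈ T, φ j i * (x i - θ i) ≤ ∑ i ∈ T, g i := by
        refine Finset.sum_le_sum fun i _ => ?_
        rcases lt_trichotomy i m with h | h | h
        · simp only [hg, if_pos h]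
          exact mul_le_mul_of_nonneg_left (by linarith [(hx i).2]) (hφnn j i)
        · have hgi : g i = -(φ j m) := by simp [hg, h]
          rw [hgi, h]
          nlinarith [hφnn j m, hxm]
        · have hne : i ≠ m := ne_of_gt h
          simp only [hg, if_neg (not_lt.mpr h.le), if_neg hne]
          rw [hagm i h]; simp
      -- compute ∑ g over T
      set S := T.filter (fun i => i < m) with hSdef
      have hsplit : ∑ i ∈ T, g i
          = ∑ i ∈ S, g i + ∑ i ∈ T.filter (fun i => ¬ i < m), g i :=
        (Finset.sum_filter_add_sum_filter_not T _ g).symm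
      have h2 : ∑ i ∈ T.filter (fun i => ¬ i < m), g i = -(φ j m) := by
        rw [Finset.sum_eq_single_of_mem m
          (Finset.mem_filter.mpr ⟨hmT, lt_irrefl m⟩)
          (fun i hi hne => by
            have hnlt := (Finset.mem_filter.mp hi).2
            simp only [hg, if_neg hnlt, if_neg hne])]
        simp [hg]
      have h1 : ∑ i ∈ S, g i = ∑ i ∈ S, φ j i * (u i - θ i) := by
        refine Finset.sum_congr rfl fun i hi => ?_
        have := (Finset.mem_filter.mp hi).2
        simp only [hg, if_pos this]
      have hS : S = (Finset.Ioo j m).filter (fun k => 1 ≤ θ k) := by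
        ext i
        simp only [hSdef, hT, Finset.mem_filter, Finset.mem_Ioi, Finset.mem_Ioo]
        tauto
      have hinner : ∀ i ∈ S, (Finset.Ioo j i).filter (fun k => 1 ≤ θ k)
          = S.filter (fun k => k < i) := by
        intro i hi
        have him : i < m := (Finset.mem_filter.mp hi).2
        ext k
        simp only [hS, Finset.mem_filter, Finset.mem_Ioo]
        constructor
        · rintro ⟨⟨h1, h2⟩, h3⟩
          exact ⟨⟨⟨h1, h2.trans him⟩, h3⟩, h2⟩
        · rintro ⟨⟨⟨h1, _⟩, h3⟩, h4⟩
          exact ⟨⟨h1, h4⟩, h3⟩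
      have hterm : ∀ i ∈ S, φ j i * (u i - θ i)
          = (u j - θ j) * ((u i - θ i) * ∏ k ∈ S.filter (fun k => k < i),
              ((u k - θ k) + 1)) := by
        intro i hi
        rw [hφ, hinner i hi,
          Finset.prod_congr rfl (fun k _ => by ring :
            ∀ k ∈ S.filter (fun k => k < i), (u k + 1 - θ k) = ((u k - θ k) + 1))]
        ring
      have htel : ∑ i ∈ S, φ j i * (u i - θ i) = φ j m - (u j - θ j) := by
        rw [Finset.sum_congr rfl hterm, ← Finset.mul_sum,
          telescope_aux (fun k => u k - θ k) S, hφ j m, ← hS,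
          Finset.prod_congr rfl (fun k _ => by ring :
            ∀ k ∈ S, (u k + 1 - θ k) = ((u k - θ k) + 1))]
        ring
      have hxj := (hx j).2
      calc x j + ∑ i ∈ T, φ j i * (x i - θ i)
          ≤ x j + ∑ i ∈ T, g i := by linarith
        _ = x j + (φ j m - (u j - θ j)) + (-(φ j m)) := by
            rw [hsplit, h2, h1, htel]; ring
        _ ≤ θ j := by linarith
  refine ⟨part1, ?_⟩
  intro j y hy
  set T := (Finset.Ioi j).filter (fun i => 1 ≤ θ i) with hT
  have key : convexHull ℝ (toReal ''
        {x : Fin n → ℤ | (∀ i, 0 ≤ x i ∧ x i ≤ u i) ∧ ∑ i, a i * x i ≤ b})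
      ⊆ {y : Fin n → ℝ |
        y j + ∑ i ∈ T, (φ j i : ℝ) * (y i - (θ i : ℝ)) ≤ (θ j : ℝ)} := by
    apply convexHull_min
    · rintro _ ⟨x, ⟨hx1, hx2⟩, rfl⟩
      have h := part1 j x hx1 hx2
      simp only [Set.mem_setOf_eq, toReal]
      exact_mod_cast h
    · intro y1 hy1 y2 hy2 p q hp hq hpq
      simp only [Set.mem_setOf_eq] at hy1 hy2 ⊢
      simp only [Pi.add_apply, Pi.smul_apply, smul_eq_mul]
      have hterm : ∀ i ∈ T, (φ j i : ℝ) * ((p * y1 i + q * y2 i) - (θ i : ℝ))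
          = p * ((φ j i : ℝ) * (y1 i - (θ i : ℝ)))
            + q * ((φ j i : ℝ) * (y2 i - (θ i : ℝ))) := by
        intro i _
        linear_combination (φ j i : ℝ) * (θ i : ℝ) * hpq
      rw [Finset.sum_congr rfl hterm, Finset.sum_add_distrib, ← Finset.mul_sum,
        ← Finset.mul_sum]
      have h3 : p * (θ j : ℝ) + q * (θ j : ℝ) = (θ j : ℝ) := by
        rw [← add_mul, hpq, one_mul]
      linarith [mul_le_mul_of_nonneg_left hy1 hp, mul_le_mul_of_nonneg_left hy2 hq, h3]
  exact key hy
end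

section
/- Assume {(a_i,u_i)}_{i=1}^n is superincreasing and a_i u_i ≤ b for all i. Then K = {x ∈ rect(u) : x_j + ∑_{i ∈ I_j} φ_j(i)·(x_i − θ_i) ≤ θ_j for all j ∈ {1,…,n}}; that is, the packing inequalities together with the bounds 0 ≤ x ≤ u give an exact integer reformulation of the superincreasing knapsack. -/
lemma telescope' {α : Type*} [LinearOrder α] (S : Finset α) (f : α → ℤ) :
    ∑ i ∈ S, (∏ k ∈ S.filter (fun k => k < i), f k) * (f i - 1) = ∏ k ∈ S, f k - 1 := by
  classical
  induction S using Finset.induction_on_max with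
  | empty => simp
  | insert a s ha ih =>
    have hns : a ∉ s := fun h => lt_irrefl a (ha a h)
    have h1 : (insert a s).filter (fun k => k < a) = s := by
      ext k
      simp only [Finset.mem_filter, Finset.mem_insert]
      constructor
      · rintro ⟨h | h, hk⟩
        · exact absurd hk (by simp [h])
        · exact h
      · intro h; exact ⟨Or.inr h, ha k h⟩
    have h2 : ∀ i ∈ s, (insert a s).filter (fun k => k < i) = s.filter (fun k => k < i) := by
      intro i hi
      ext k
      simp only [Finset.mem_filter, Finset.mem_insert]
      constructor
      · rintro ⟨h | h, hk⟩
        · exact absurd hk (by simp [h]; exact le_of_lt (ha i hi))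
        · exact ⟨h, hk⟩
      · rintro ⟨h, hk⟩; exact ⟨Or.inr h, hk⟩
    rw [Finset.sum_insert hns, Finset.prod_insert hns, h1,
      Finset.sum_congr rfl (fun i hi => by rw [h2 i hi]), ih]
    ring

/-- the packing inequalities together with the bounds `0 ≤ x ≤ u` give an
exact integer reformulation of the superincreasing knapsack `K`. -/
theorem stmt_7 {n : ℕ} (hn : 1 ≤ n)
    (a u : Fin n → ℤ) (ha : ∀ i, 0 < a i) (hu : ∀ i, 1 ≤ u i)
    (b : ℤ) (hb : 0 < b)
    (hub : ∀ i, a i * u i ≤ b)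
    (hsi : ∀ i j : Fin n, (j : ℕ) = (i : ℕ) + 1 →
      ∑ k ∈ Finset.Iic i, a k * u k ≤ a j)
    (θ : Fin n → ℤ)
    (hθ : ∀ i : Fin n,
      θ i = min (u i) ((b - ∑ k ∈ Finset.Ioi i, a k * θ k).fdiv (a i)))
    (φ : Fin n → Fin n → ℤ)
    (hφ : ∀ j i : Fin n, φ j i =
      (u j - θ j) * ∏ k ∈ (Finset.Ioo j i).filter (fun k => 1 ≤ θ k), (u k + 1 - θ k)) :
    {x : Fin n → ℤ | (∀ i, 0 ≤ x i ∧ x i ≤ u i) ∧ ∑ i, a i * x i ≤ b} =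
      {x : Fin n → ℤ | (∀ i, 0 ≤ x i ∧ x i ≤ u i) ∧
        ∀ j : Fin n,
          x j + ∑ i ∈ (Finset.Ioi j).filter (fun i => 1 ≤ θ i), φ j i * (x i - θ i)
            ≤ θ j} := by
  classical
  set R : Fin n → ℤ := fun j => b - ∑ k ∈ Finset.Ioi j, a k * θ k with hR
  -- basic fdiv facts
  have hmulle : ∀ (r c : ℤ), 0 < c → c * (r.fdiv c) ≤ r := by
    intro r c hc
    rw [Int.fdiv_eq_ediv_of_nonneg _ (le_of_lt hc)]
    have h1 := Int.emod_nonneg r (ne_of_gt hc)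
    have h2 := Int.mul_ediv_add_emod r c
    linarith
  have hltmul : ∀ (r c : ℤ), 0 < c → r < c * (r.fdiv c + 1) := by
    intro r c hc
    rw [Int.fdiv_eq_ediv_of_nonneg _ (le_of_lt hc)]
    have h1 := Int.emod_lt_of_pos r hc
    have h2 := Int.mul_ediv_add_emod r c
    linarith [mul_le_mul_of_nonneg_left (le_refl (r / c)) (le_of_lt hc)]
  have haθ : ∀ j, a j * θ j ≤ R j := by
    intro j
    have h1 : θ j ≤ (R j).fdiv (a j) := by rw [hθ j]; exact min_le_right _ _
    calc a j * θ j ≤ a j * ((R j).fdiv (a j)) :=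
          mul_le_mul_of_nonneg_left h1 (le_of_lt (ha j))
      _ ≤ R j := hmulle _ _ (ha j)
  -- step for R
  have hIoi_split : ∀ j j' : Fin n, (j' : ℕ) = (j : ℕ) + 1 →
      Finset.Ioi j = insert j' (Finset.Ioi j') := by
    intro j j' hjj
    ext k
    simp only [Finset.mem_Ioi, Finset.mem_insert, Fin.lt_def, Fin.ext_iff]
    omega
  have hRnn : ∀ j, 0 ≤ R j := by
    have key : ∀ m : ℕ, ∀ j : Fin n, n - (j : ℕ) ≤ m → 0 ≤ R j := by
      intro m
      induction m with
      | zero => intro j hj; exact absurd hj (by have := j.isLt; omega)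
      | succ m ih =>
        intro j hj
        by_cases hjt : (j : ℕ) = n - 1
        · have : Finset.Ioi j = ∅ := by
            ext k
            simp only [Finset.mem_Ioi, Fin.lt_def, Finset.notMem_empty, iff_false, not_lt]
            have := k.isLt; omega
          simp only [hR, this, Finset.sum_empty, sub_zero]
          exact le_of_lt hb
        · have hjlt : (j : ℕ) + 1 < n := by have := j.isLt; omega
          set j' : Fin n := ⟨(j : ℕ) + 1, hjlt⟩ with hj'
          have hstep : R j = R j' - a j' * θ j' := by
            simp only [hR]
            rw [hIoi_split j j' rfl, Finset.sum_insert (by simp [Fin.lt_def])]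
            ring
          have h1 : 0 ≤ R j' := ih j' (by simp [hj']; omega)
          have h2 := haθ j'
          linarith [hstep]
    intro j
    exact key n j (by omega)
  have hθle : ∀ j, θ j ≤ u j := fun j => by rw [hθ j]; exact min_le_left _ _
  have hθnn : ∀ j, 0 ≤ θ j := by
    intro j
    rw [hθ j]
    refine le_min (by linarith [hu j]) ?_
    rw [Int.fdiv_eq_ediv_of_nonneg _ (le_of_lt (ha j))]
    exact Int.ediv_nonneg (hRnn j) (le_of_lt (ha j))
  have hθltu : ∀ j, θ j < u j → R j < a j * (θ j + 1) := by
    intro j hjlt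
    have h1 : θ j = (R j).fdiv (a j) := by
      rcases min_cases (u j) ((R j).fdiv (a j)) with ⟨h, _⟩ | ⟨h, _⟩
      · rw [hθ j] at hjlt; rw [h] at hjlt; exact absurd hjlt (lt_irrefl _)
      · rw [hθ j, h]
    rw [h1]
    exact hltmul _ _ (ha j)
  -- splitting sums at a point
  have hsplit : ∀ (f : Fin n → ℤ) (m : Fin n),
      ∑ i, f i = (∑ i ∈ Finset.Ioi m, f i) + f m + ∑ i ∈ Finset.Iio m, f i := by
    intro f m
    have h1 : (Finset.univ : Finset (Fin n)) = Finset.Ioi m ∪ Finset.Iic m := by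
      ext k
      simp only [Finset.mem_univ, Finset.mem_union, Finset.mem_Ioi, Finset.mem_Iic,
        Fin.lt_def, Fin.le_def, true_iff]
      omega
    have h2 : Finset.Iic m = insert m (Finset.Iio m) := by
      ext k
      simp only [Finset.mem_Iic, Finset.mem_insert, Finset.mem_Iio, Fin.lt_def, Fin.le_def,
        Fin.ext_iff]
      omega
    have hd : Disjoint (Finset.Ioi m) (Finset.Iic m) := by
      rw [Finset.disjoint_left]
      intro k hk1 hk2
      simp only [Finset.mem_Ioi] at hk1
      simp only [Finset.mem_Iic] at hk2
      exact absurd (lt_of_lt_of_le hk1 hk2) (lt_irrefl m)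
    rw [h1, Finset.sum_union hd, h2, Finset.sum_insert (by simp)]
    ring
  -- superincreasing, telescoped form
  have hsil : ∀ j : Fin n, ∑ k ∈ Finset.Iio j, a k * u k ≤ a j := by
    intro j
    by_cases hj0 : (j : ℕ) = 0
    · have : Finset.Iio j = ∅ := by
        ext k; simp only [Finset.mem_Iio, Fin.lt_def, Finset.notMem_empty, iff_false, not_lt]
        omega
      rw [this]; simpa using le_of_lt (ha j)
    · have hjp : (j : ℕ) - 1 < n := by have := j.isLt; omega
      set i : Fin n := ⟨(j : ℕ) - 1, hjp⟩ with hi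
      have heq : Finset.Iic i = Finset.Iio j := by
        ext k
        simp only [Finset.mem_Iic, Finset.mem_Iio, Fin.lt_def, Fin.le_def]
        simp only [hi]
        omega
      have := hsi i j (by simp [hi]; omega)
      rwa [heq] at this
  -- the lex characterization of the knapsack
  have hL1 : ∀ x : Fin n → ℤ, (∀ i, 0 ≤ x i ∧ x i ≤ u i) → (∑ i, a i * x i ≤ b) →
      ∀ j, (∀ i, j < i → x i = θ i) → x j ≤ θ j := by
    intro x hrect hsum j hup
    by_contra hcon
    push_neg at hcon
    have hxj : θ j + 1 ≤ x j := hcon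
    have hθu : θ j < u j := lt_of_lt_of_le hcon (hrect j).2
    have h1 : R j < a j * x j :=
      lt_of_lt_of_le (hθltu j hθu) (mul_le_mul_of_nonneg_left hxj (le_of_lt (ha j)))
    have h2 : ∑ i ∈ Finset.Ioi j, a i * x i = ∑ i ∈ Finset.Ioi j, a i * θ i :=
      Finset.sum_congr rfl (fun i hi => by rw [hup i (Finset.mem_Ioi.mp hi)])
    have h3 : 0 ≤ ∑ i ∈ Finset.Iio j, a i * x i :=
      Finset.sum_nonneg (fun i _ => mul_nonneg (le_of_lt (ha i)) (hrect i).1)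
    have h4 := hsplit (fun i => a i * x i) j
    simp only [hR] at h1
    linarith [h4, h2]
  have hL2 : ∀ x : Fin n → ℤ, (∀ i, 0 ≤ x i ∧ x i ≤ u i) →
      (∀ j, (∀ i, j < i → x i = θ i) → x j ≤ θ j) → ∑ i, a i * x i ≤ b := by
    intro x hrect hlex
    by_cases hx : ∀ i, x i = θ i
    · have hsum : ∑ i, a i * x i = ∑ i, a i * θ i :=
        Finset.sum_congr rfl (fun i _ => by rw [hx i])
      rw [hsum]
      set j0 : Fin n := ⟨0, hn⟩ with hj0
      have h4 := hsplit (fun i => a i * θ i) j0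
      have h5 : Finset.Iio j0 = ∅ := by
        ext k; simp only [Finset.mem_Iio, Fin.lt_def, Finset.notMem_empty, iff_false, not_lt]
        simp only [hj0]
        omega
      have := haθ j0
      simp only [hR] at this
      rw [h4, h5, Finset.sum_empty]
      linarith
    · push_neg at hx
      set F : Finset (Fin n) := Finset.univ.filter (fun i => x i ≠ θ i) with hF
      have hFne : F.Nonempty := by
        obtain ⟨i, hi⟩ := hx
        exact ⟨i, by simp [hF, hi]⟩
      set m : Fin n := F.max' hFne with hm
      have hup : ∀ i, m < i → x i = θ i := by
        intro i hi
        by_contra hne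
        have : i ∈ F := by simp [hF, hne]
        exact absurd (lt_of_le_of_lt (F.le_max' i this) hi) (lt_irrefl i)
      have hxm : x m ≤ θ m := hlex m hup
      have hxmne : x m ≠ θ m := by
        have : m ∈ F := F.max'_mem hFne
        simpa [hF] using this
      have hxm1 : x m ≤ θ m - 1 := by
        rcases lt_or_eq_of_le hxm with h | h
        · omega
        · exact absurd h hxmne
      have h2 : ∑ i ∈ Finset.Ioi m, a i * x i = ∑ i ∈ Finset.Ioi m, a i * θ i :=
        Finset.sum_congr rfl (fun i hi => by rw [hup i (Finset.mem_Ioi.mp hi)])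
      have h3 : ∑ i ∈ Finset.Iio m, a i * x i ≤ ∑ i ∈ Finset.Iio m, a i * u i :=
        Finset.sum_le_sum (fun i _ =>
          mul_le_mul_of_nonneg_left (hrect i).2 (le_of_lt (ha i)))
      have h4 := hsplit (fun i => a i * x i) m
      have h5 := hsil m
      have h6 := haθ m
      have h7 : a m * x m ≤ a m * (θ m - 1) :=
        mul_le_mul_of_nonneg_left hxm1 (le_of_lt (ha m))
      simp only [hR] at h6
      have h8 : a m * (θ m - 1) = a m * θ m - a m := by ring
      linarith
  -- conclusion
  ext x
  simp only [Set.mem_setOf_eq]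
  constructor
  · rintro ⟨hrect, hsum⟩
    refine ⟨hrect, ?_⟩
    have hlex := hL1 x hrect hsum
    -- packing from lex
    intro j
    set T : Finset (Fin n) := (Finset.Ioi j).filter (fun i => 1 ≤ θ i) with hT
    by_cases hx : ∀ i, j < i → x i = θ i
    · have hz : ∑ i ∈ T, φ j i * (x i - θ i) = 0 := by
        refine Finset.sum_eq_zero (fun i hi => ?_)
        have : j < i := by
          have := hi; simp only [hT, Finset.mem_filter, Finset.mem_Ioi] at this
          exact this.1
        rw [hx i this]; ring
      rw [hz]
      simpa using hlex j hx
    · push_neg at hx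
      set F : Finset (Fin n) := (Finset.Ioi j).filter (fun i => x i ≠ θ i) with hF
      have hFne : F.Nonempty := by
        obtain ⟨i, hi1, hi2⟩ := hx
        exact ⟨i, by simp [hF, hi1, hi2]⟩
      set m : Fin n := F.max' hFne with hm
      have hmF : m ∈ F := F.max'_mem hFne
      have hjm : j < m := by
        have := hmF; simp only [hF, Finset.mem_filter, Finset.mem_Ioi] at this
        exact this.1
      have hxmne : x m ≠ θ m := by
        have := hmF; simp only [hF, Finset.mem_filter] at this
        exact this.2
      have hup : ∀ i, m < i → x i = θ i := by
        intro i hi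
        by_contra hne
        have : i ∈ F := by
          simp only [hF, Finset.mem_filter, Finset.mem_Ioi]
          exact ⟨lt_trans hjm hi, hne⟩
        exact absurd (lt_of_le_of_lt (F.le_max' i this) hi) (lt_irrefl i)
      have hxm : x m ≤ θ m := hlex m hup
      have hxm1 : x m ≤ θ m - 1 := by
        rcases lt_or_eq_of_le hxm with h | h
        · omega
        · exact absurd h hxmne
      have hθm1 : 1 ≤ θ m := by have := (hrect m).1; omega
      have hmT : m ∈ T := by
        simp only [hT, Finset.mem_filter, Finset.mem_Ioi]
        exact ⟨hjm, hθm1⟩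
      -- the weight function
      set c : Fin n → ℤ := fun k => u k + 1 - θ k with hc
      have hc1 : ∀ k, 1 ≤ c k := fun k => by simp only [hc]; linarith [hθle k]
      set P : Fin n → ℤ := fun i => ∏ k ∈ (Finset.Ioo j i).filter (fun k => 1 ≤ θ k), c k
        with hP
      have hPnn : ∀ i, 0 ≤ P i := fun i =>
        Finset.prod_nonneg (fun k _ => le_trans zero_le_one (hc1 k))
      have hφP : ∀ i, φ j i = (u j - θ j) * P i := fun i => hφ j i
      -- split T
      set T₁ : Finset (Fin n) := T.filter (fun i => i < m) with hT₁
      set T₂ : Finset (Fin n) := T.filter (fun i => m < i) with hT₂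
      have hTsplit : T = T₁ ∪ insert m T₂ := by
        ext k
        simp only [hT₁, hT₂, Finset.mem_union, Finset.mem_insert, Finset.mem_filter]
        constructor
        · intro hk
          rcases lt_trichotomy k m with h | h | h
          · exact Or.inl ⟨hk, h⟩
          · exact Or.inr (Or.inl h)
          · exact Or.inr (Or.inr ⟨hk, h⟩)
        · rintro (⟨hk, _⟩ | h | ⟨hk, _⟩)
          · exact hk
          · rw [h]; exact hmT
          · exact hk
      have hd1 : Disjoint T₁ (insert m T₂) := by
        rw [Finset.disjoint_left]
        intro k hk1 hk2
        simp only [hT₁, Finset.mem_filter] at hk1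
        simp only [hT₂, Finset.mem_insert, Finset.mem_filter] at hk2
        rcases hk2 with h | ⟨_, h⟩
        · rw [h] at hk1; exact absurd hk1.2 (lt_irrefl m)
        · exact absurd (lt_trans hk1.2 h) (lt_irrefl k)
      have hmT₂ : m ∉ T₂ := by simp [hT₂]
      -- sum over T₂ vanishes
      have hsum2 : ∑ i ∈ T₂, φ j i * (x i - θ i) = 0 := by
        refine Finset.sum_eq_zero (fun i hi => ?_)
        have : m < i := by
          have := hi; simp only [hT₂, Finset.mem_filter] at this; exact this.2
        rw [hup i this]; ring
      -- P m = prod over T₁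
      have hPm : P m = ∏ k ∈ T₁, c k := by
        simp only [hP]
        congr 1
        ext k
        simp only [hT₁, hT, Finset.mem_filter, Finset.mem_Ioo, Finset.mem_Ioi]
        tauto
      -- inner sum bound over T₁
      have hinner : ∑ i ∈ T₁, P i * (x i - θ i) ≤ P m - 1 := by
        have hb1 : ∀ i ∈ T₁, P i * (x i - θ i) ≤ P i * (c i - 1) := by
          intro i _
          refine mul_le_mul_of_nonneg_left ?_ (hPnn i)
          simp only [hc]
          linarith [(hrect i).2]
        have hb2 : ∀ i ∈ T₁, P i = ∏ k ∈ T₁.filter (fun k => k < i), c k := by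
          intro i hi
          have him : i < m := by
            have := hi; simp only [hT₁, Finset.mem_filter] at this; exact this.2
          simp only [hP]
          congr 1
          ext k
          simp only [hT₁, hT, Finset.mem_filter, Finset.mem_Ioo, Finset.mem_Ioi]
          constructor
          · rintro ⟨⟨h1, h2⟩, h3⟩
            exact ⟨⟨⟨h1, h3⟩, lt_trans h2 him⟩, h2⟩
          · rintro ⟨⟨⟨h1, h3⟩, _⟩, h2⟩
            exact ⟨⟨h1, h2⟩, h3⟩
        calc ∑ i ∈ T₁, P i * (x i - θ i) ≤ ∑ i ∈ T₁, P i * (c i - 1) :=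
              Finset.sum_le_sum hb1
          _ = ∑ i ∈ T₁, (∏ k ∈ T₁.filter (fun k => k < i), c k) * (c i - 1) :=
              Finset.sum_congr rfl (fun i hi => by rw [hb2 i hi])
          _ = ∏ k ∈ T₁, c k - 1 := telescope' T₁ c
          _ = P m - 1 := by rw [hPm]
      -- combine
      have hfact : ∑ i ∈ T, φ j i * (x i - θ i) =
          (u j - θ j) * ∑ i ∈ T, P i * (x i - θ i) := by
        rw [Finset.mul_sum]
        refine Finset.sum_congr rfl (fun i _ => ?_)
        rw [hφP i]; ring
      have hsum2' : ∑ i ∈ T₂, P i * (x i - θ i) = 0 := by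
        refine Finset.sum_eq_zero (fun i hi => ?_)
        have : m < i := by
          have := hi; simp only [hT₂, Finset.mem_filter] at this; exact this.2
        rw [hup i this]; ring
      have hQ : ∑ i ∈ T, P i * (x i - θ i) ≤ -1 := by
        rw [hTsplit, Finset.sum_union hd1, Finset.sum_insert hmT₂, hsum2']
        have hterm : P m * (x m - θ m) ≤ -P m := by
          have : x m - θ m ≤ -1 := by linarith
          calc P m * (x m - θ m) ≤ P m * (-1) :=
                mul_le_mul_of_nonneg_left this (hPnn m)
            _ = -P m := by ring
        linarith [hinner]
      have huθ : 0 ≤ u j - θ j := by linarith [hθle j]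
      have : ∑ i ∈ T, φ j i * (x i - θ i) ≤ -(u j - θ j) := by
        rw [hfact]
        calc (u j - θ j) * ∑ i ∈ T, P i * (x i - θ i) ≤ (u j - θ j) * (-1) :=
              mul_le_mul_of_nonneg_left hQ huθ
          _ = -(u j - θ j) := by ring
      linarith [(hrect j).2]
  · rintro ⟨hrect, hpack⟩
    refine ⟨hrect, ?_⟩
    refine hL2 x hrect ?_
    intro j hup
    have hp := hpack j
    have hz : ∑ i ∈ (Finset.Ioi j).filter (fun i => 1 ≤ θ i), φ j i * (x i - θ i) = 0 := by
      refine Finset.sum_eq_zero (fun i hi => ?_)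
      have : j < i := by
        have := hi; simp only [Finset.mem_filter, Finset.mem_Ioi] at this
        exact this.1
      rw [hup i this]; ring
    rw [hz] at hp
    linarith
end

section
/- Assume {(a_i,u_i)}_{i=1}^n is superincreasing and a_i u_i ≤ b for all i. Let j ∈ {1,…,n} with θ_j < u_j, let i ∈ I_j, and let x̂ ∈ rect(u) satisfy x̂_k = θ_k for all k ∈ I_j with k > i. (1) If x̂_j = u_j, x̂_k = u_k for all k ∈ I_j with k < i, and x̂_i = θ_i − 1, then x̂ satisfies the packing inequality for j with equality: x̂_j + ∑_{k ∈ I_j} φ_j(k)(x̂_k − θ_k) = θ_j. (2) If x̂_i ≤ θ_i − 2, then x̂_j + ∑_{k ∈ I_j} φ_j(k)(x̂_k − θ_k) < θ_j; in particular x̂ does not lie on the face F_j = {x ∈ conv(K) : x_j + ∑_{k ∈ I_j} φ_j(k)(x_k − θ_k) = θ_j}. -/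
private lemma tele {α : Type*} [LinearOrder α] [DecidableEq α] (S : Finset α) (w : α → ℤ) :
    ∑ k ∈ S, (∏ m ∈ S.filter (· < k), w m) * (w k - 1) = (∏ m ∈ S, w m) - 1 := by
  induction S using Finset.induction_on_max with
  | empty => simp
  | insert a s ha ih =>
    have ha' : a ∉ s := fun h => lt_irrefl a (ha a h)
    rw [Finset.sum_insert ha']
    have hfa : (insert a s).filter (· < a) = s := by
      ext m
      simp only [Finset.mem_filter, Finset.mem_insert]
      constructor
      · rintro ⟨h1 | h1, h2⟩
        · exact absurd h2 (by rw [h1]; exact lt_irrefl a)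
        · exact h1
      · intro hm; exact ⟨Or.inr hm, ha m hm⟩
    have hfs : ∀ k ∈ s, (insert a s).filter (· < k) = s.filter (· < k) := by
      intro k hk
      ext m
      simp only [Finset.mem_filter, Finset.mem_insert]
      constructor
      · rintro ⟨h1 | h1, h2⟩
        · exact absurd (h1 ▸ h2).trans (by intro h; exact absurd (h (ha k hk)) (lt_irrefl a))
        · exact ⟨h1, h2⟩
      · rintro ⟨h1, h2⟩; exact ⟨Or.inr h1, h2⟩
    rw [Finset.sum_congr rfl (fun k hk => by rw [hfs k hk]), ih, hfa,
      Finset.prod_insert ha']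
    ring

/-- points on / off the face defined by the `j`-th packing inequality.
Let `θ j < u j`, `i ∈ I_j`, and let `x̂ ∈ rect u` agree with `θ` on all `k ∈ I_j` with
`k > i`.  (1) If `x̂ j = u j`, `x̂ k = u k` for `k ∈ I_j` with `k < i`, and
`x̂ i = θ i - 1`, then the packing inequality for `j` is tight at `x̂`.  (2) If
`x̂ i ≤ θ i - 2`, then it is strict, and `x̂` is not on the face `F_j`. -/
theorem stmt_8 {n : ℕ} (hn : 1 ≤ n)
    (a u : Fin n → ℤ) (ha : ∀ i, 0 < a i) (hu : ∀ i, 1 ≤ u i)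
    (b : ℤ) (hb : 0 < b)
    (hub : ∀ i, a i * u i ≤ b)
    (hsi : ∀ i j : Fin n, (j : ℕ) = (i : ℕ) + 1 →
      ∑ k ∈ Finset.Iic i, a k * u k ≤ a j)
    (θ : Fin n → ℤ)
    (hθ : ∀ i : Fin n,
      θ i = min (u i) ((b - ∑ k ∈ Finset.Ioi i, a k * θ k).fdiv (a i)))
    (φ : Fin n → Fin n → ℤ)
    (hφ : ∀ j i : Fin n, φ j i =
      (u j - θ j) * ∏ k ∈ (Finset.Ioo j i).filter (fun k => 1 ≤ θ k), (u k + 1 - θ k))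
    (j i : Fin n) (hju : θ j < u j) (hji : j < i) (hθi : 1 ≤ θ i)
    (xh : Fin n → ℤ) (hxh : ∀ k, 0 ≤ xh k ∧ xh k ≤ u k)
    (hfix : ∀ k, i < k → 1 ≤ θ k → xh k = θ k) :
    ((xh j = u j → (∀ k, j < k → k < i → 1 ≤ θ k → xh k = u k) → xh i = θ i - 1 →
      xh j + ∑ k ∈ (Finset.Ioi j).filter (fun k => 1 ≤ θ k), φ j k * (xh k - θ k)
        = θ j)) ∧
    (xh i ≤ θ i - 2 →
      (xh j + ∑ k ∈ (Finset.Ioi j).filter (fun k => 1 ≤ θ k), φ j k * (xh k - θ k)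
        < θ j) ∧
      toReal xh ∉ {y : Fin n → ℝ |
        y ∈ convexHull ℝ (toReal ''
          {x : Fin n → ℤ | (∀ t, 0 ≤ x t ∧ x t ≤ u t) ∧ ∑ t, a t * x t ≤ b}) ∧
        y j + ∑ k ∈ (Finset.Ioi j).filter (fun k => 1 ≤ θ k),
          (φ j k : ℝ) * (y k - (θ k : ℝ)) = (θ j : ℝ)}) := by
  classical
  have hθu : ∀ k, θ k ≤ u k := fun k => by rw [hθ k]; exact min_le_left _ _
  set w : Fin n → ℤ := fun k => u k + 1 - θ k with hwdef
  set S : Finset (Fin n) := (Finset.Ioo j i).filter (fun k => 1 ≤ θ k) with hSdef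
  set T : Finset (Fin n) := (Finset.Ioi j).filter (fun k => 1 ≤ θ k) with hTdef
  have hw1 : ∀ k, 1 ≤ w k := fun k => by have := hθu k; simp only [hwdef]; omega
  have hφS : ∀ k ∈ S, φ j k = (u j - θ j) * ∏ m ∈ S.filter (· < k), w m := by
    intro k hk
    obtain ⟨hk1, hk2⟩ := Finset.mem_filter.mp hk
    have hki : k < i := (Finset.mem_Ioo.mp hk1).2
    rw [hφ j k]
    congr 1
    apply Finset.prod_congr _ (fun _ _ => rfl)
    ext m
    simp only [hSdef, Finset.mem_filter, Finset.mem_Ioo]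
    constructor
    · rintro ⟨⟨h1, h2⟩, h3⟩; exact ⟨⟨⟨h1, h2.trans hki⟩, h3⟩, h2⟩
    · rintro ⟨⟨⟨h1, _⟩, h3⟩, h2⟩; exact ⟨⟨h1, h2⟩, h3⟩
  have hφi : φ j i = (u j - θ j) * ∏ m ∈ S, w m := by
    rw [hφ j i]
  have hiT : i ∈ T := Finset.mem_filter.mpr ⟨Finset.mem_Ioi.mpr hji, hθi⟩
  have hiS : i ∉ S := fun h =>
    absurd (Finset.mem_Ioo.mp (Finset.mem_filter.mp h).1).2 (lt_irrefl i)
  have hsub : insert i S ⊆ T := by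
    intro k hk
    rcases Finset.mem_insert.mp hk with rfl | hk
    · exact hiT
    · obtain ⟨hk1, hk2⟩ := Finset.mem_filter.mp hk
      exact Finset.mem_filter.mpr ⟨Finset.mem_Ioi.mpr (Finset.mem_Ioo.mp hk1).1, hk2⟩
  have hsplit : ∑ k ∈ T, φ j k * (xh k - θ k)
      = φ j i * (xh i - θ i) + ∑ k ∈ S, φ j k * (xh k - θ k) := by
    have hzero : ∀ k ∈ T, k ∉ insert i S → φ j k * (xh k - θ k) = 0 := by
      intro k hkT hk
      obtain ⟨hk1, hk2⟩ := Finset.mem_filter.mp hkT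
      have hjk := Finset.mem_Ioi.mp hk1
      have hik : i < k := by
        rcases lt_trichotomy k i with h | h | h
        · exact absurd (Finset.mem_insert.mpr (Or.inr
            (Finset.mem_filter.mpr ⟨Finset.mem_Ioo.mpr ⟨hjk, h⟩, hk2⟩))) hk
        · exact absurd (Finset.mem_insert.mpr (Or.inl h)) hk
        · exact h
      rw [hfix k hik hk2]; ring
    rw [← Finset.sum_subset hsub hzero, Finset.sum_insert hiS]
  have hD : 1 ≤ u j - θ j := by omega
  have hPk0 : ∀ k : Fin n, 0 ≤ ∏ m ∈ S.filter (· < k), w m :=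
    fun k => Finset.prod_nonneg (fun m _ => by have := hw1 m; omega)
  constructor
  · -- Part 1: equality
    intro h1 h2 h3
    have hsum1 : ∑ k ∈ S, φ j k * (xh k - θ k)
        = (u j - θ j) * ((∏ m ∈ S, w m) - 1) := by
      calc ∑ k ∈ S, φ j k * (xh k - θ k)
          = ∑ k ∈ S, (u j - θ j) * ((∏ m ∈ S.filter (· < k), w m) * (w k - 1)) := by
            apply Finset.sum_congr rfl
            intro k hk
            obtain ⟨hk1, hk2⟩ := Finset.mem_filter.mp hk
            obtain ⟨hjk, hki⟩ := Finset.mem_Ioo.mp hk1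
            rw [hφS k hk, h2 k hjk hki hk2]
            have : w k = u k + 1 - θ k := rfl
            rw [this]; ring
        _ = (u j - θ j) * ∑ k ∈ S, (∏ m ∈ S.filter (· < k), w m) * (w k - 1) := by
            rw [Finset.mul_sum]
        _ = (u j - θ j) * ((∏ m ∈ S, w m) - 1) := congrArg _ (tele S w)
    rw [hsplit, hφi, hsum1, h1, h3]
    ring
  · -- Part 2: strict inequality
    intro h4
    have hP1 : 1 ≤ ∏ m ∈ S, w m := by
      calc (1 : ℤ) = ∏ m ∈ S, 1 := (Finset.prod_const_one).symm
        _ ≤ ∏ m ∈ S, w m :=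
          Finset.prod_le_prod (fun m _ => zero_le_one) (fun m _ => hw1 m)
    have hsum2 : ∑ k ∈ S, φ j k * (xh k - θ k)
        ≤ (u j - θ j) * ((∏ m ∈ S, w m) - 1) := by
      calc ∑ k ∈ S, φ j k * (xh k - θ k)
          ≤ ∑ k ∈ S, (u j - θ j) * ((∏ m ∈ S.filter (· < k), w m) * (w k - 1)) := by
            apply Finset.sum_le_sum
            intro k hk
            rw [hφS k hk, mul_assoc]
            apply mul_le_mul_of_nonneg_left _ (by omega)
            apply mul_le_mul_of_nonneg_left _ (hPk0 k)
            have h5 := (hxh k).2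
            have : w k = u k + 1 - θ k := rfl
            omega
        _ = (u j - θ j) * ∑ k ∈ S, (∏ m ∈ S.filter (· < k), w m) * (w k - 1) := by
            rw [Finset.mul_sum]
        _ ≤ (u j - θ j) * ((∏ m ∈ S, w m) - 1) := le_of_eq (congrArg _ (tele S w))
    have hbi : φ j i * (xh i - θ i) ≤ (u j - θ j) * (∏ m ∈ S, w m) * (-2) := by
      rw [hφi]
      apply mul_le_mul_of_nonneg_left _ (mul_nonneg (by omega) (by omega))
      omega
    have hxj := (hxh j).2
    have hlt : xh j + ∑ k ∈ T, φ j k * (xh k - θ k) < θ j := by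
      rw [hsplit]
      nlinarith [hsum2, hbi, hxj, hD, hP1]
    refine ⟨hlt, ?_⟩
    intro hmem
    obtain ⟨-, heq⟩ := hmem
    have hcast : ((xh j + ∑ k ∈ T, φ j k * (xh k - θ k) : ℤ) : ℝ) = ((θ j : ℤ) : ℝ) := by
      push_cast
      simpa [toReal] using heq
    have heqZ : xh j + ∑ k ∈ T, φ j k * (xh k - θ k) = θ j := by exact_mod_cast hcast
    exact absurd heqZ (ne_of_lt hlt)
end
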